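/- arXiv:2501.13753 — 10 statements merged into one kernel-verified Lean document; each statement's English description precedes it below -/
import Mathlib

section
/- For every nonnegative integer n, the set T_1(n) of triples (α,β,γ) ∈ T(n) with β nonempty has the same cardinality as the set S_1(n−3) of triples (π,μ,δ) ∈ S(n−3) such that μ is nonempty and the smallest part of μ occurs exactly once in μ. -/
/-- `TT m` is the set of triples `(α, β, γ)` of partitions (multisets of positive integers)
with `|α|+|β|+|γ| = m`, every part of `α` congruent to `2` mod `3`, every part of `β`
congruent to `1` mod `3` and at least `7`, and every part of `γ` equal to `6` or `9`.
For `m < 0` this set is empty. -/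
def TT (m : ℤ) : Set (Multiset ℕ × Multiset ℕ × Multiset ℕ) :=
  {x | (∀ p ∈ x.1, p % 3 = 2) ∧ (∀ p ∈ x.2.1, p % 3 = 1 ∧ 7 ≤ p) ∧
       (∀ p ∈ x.2.2, p = 6 ∨ p = 9) ∧
       ((x.1.sum : ℤ) + (x.2.1.sum : ℤ) + (x.2.2.sum : ℤ) = m)}

/-- `SS m` is the set of triples `(π, μ, δ)` of partitions with `|π|+|μ|+|δ| = m`, every part
of `π` congruent to `2` mod `3`, every part of `μ` congruent to `1` mod `3` and at least `4`,
and every part of `δ` equal to `6` or `9`. For `m < 0` this set is empty. -/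
def SS (m : ℤ) : Set (Multiset ℕ × Multiset ℕ × Multiset ℕ) :=
  {x | (∀ p ∈ x.1, p % 3 = 2) ∧ (∀ p ∈ x.2.1, p % 3 = 1 ∧ 4 ≤ p) ∧
       (∀ p ∈ x.2.2, p = 6 ∨ p = 9) ∧
       ((x.1.sum : ℤ) + (x.2.1.sum : ℤ) + (x.2.2.sum : ℤ) = m)}


def mp (m : Multiset ℕ) : ℕ := m.fold min m.sum

lemma fold_min_le (m : Multiset ℕ) (b : ℕ) : ∀ a ∈ m, m.fold min b ≤ a := by
  induction m using Multiset.induction with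
  | empty => simp
  | cons c s ih =>
    intro a ha
    rw [Multiset.fold_cons_left]
    rcases Multiset.mem_cons.1 ha with rfl | h
    · exact min_le_left _ _
    · exact le_trans (min_le_right _ _) (ih a h)

lemma fold_min_mem (m : Multiset ℕ) (b : ℕ) : m.fold min b ∈ m ∨ m.fold min b = b := by
  induction m using Multiset.induction with
  | empty => simp
  | cons c s ih =>
    rw [Multiset.fold_cons_left]
    rcases le_total c (s.fold min b) with h | h
    · left; rw [min_eq_left h]; exact Multiset.mem_cons_self _ _
    · rw [min_eq_right h]
      rcases ih with h' | h'
      · exact Or.inl (Multiset.mem_cons_of_mem h')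
      · exact Or.inr h'

lemma mp_le {m : Multiset ℕ} {a : ℕ} (h : a ∈ m) : mp m ≤ a := fold_min_le m m.sum a h

lemma mp_mem {m : Multiset ℕ} (h : m ≠ 0) : mp m ∈ m := by
  rcases fold_min_mem m m.sum with h' | h'
  · exact h'
  · obtain ⟨a, ha⟩ := Multiset.exists_mem_of_ne_zero h
    have h1 : mp m ≤ a := mp_le ha
    have h2 : a ≤ m.sum := Multiset.single_le_sum (fun _ _ => Nat.zero_le _) a ha
    have : a = mp m := le_antisymm (by rw [mp, h']; exact h2) h1
    rwa [← this]

lemma mp_cons_eq {a : ℕ} {m : Multiset ℕ} (h : ∀ p ∈ m, a ≤ p) : mp (a ::ₘ m) = a := by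
  refine le_antisymm (mp_le (Multiset.mem_cons_self _ _)) ?_
  have hne : a ::ₘ m ≠ 0 := Multiset.cons_ne_zero
  rcases Multiset.mem_cons.1 (mp_mem hne) with h' | h'
  · exact h'.ge
  · exact h _ h'


/-- `T_1(n)` (triples in `T(n)` with `β ≠ ∅`) has the same cardinality as `S_1(n-3)`
(triples in `S(n-3)` whose `μ` is nonempty and whose smallest part occurs exactly once). -/
theorem card_T1_eq_card_S1 (n : ℕ) :
    Nat.card {x | x ∈ TT (n : ℤ) ∧ x.2.1 ≠ 0} =
      Nat.card {x | x ∈ SS ((n : ℤ) - 3) ∧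
        ∃ s ∈ x.2.1, x.2.1.count s = 1 ∧ ∀ p ∈ x.2.1, s ≤ p} := by
  apply Nat.card_congr
  refine ⟨fun x => ⟨(x.1.1, (mp x.1.2.1 - 3) ::ₘ x.1.2.1.erase (mp x.1.2.1), x.1.2.2), ?_⟩,
         fun y => ⟨(y.1.1, (mp y.1.2.1 + 3) ::ₘ y.1.2.1.erase (mp y.1.2.1), y.1.2.2), ?_⟩,
         ?_, ?_⟩
  · obtain ⟨⟨α, β, γ⟩, hx⟩ := x
    obtain ⟨⟨hα, hβ, hγ, hsum⟩, hne⟩ := hx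
    dsimp only at hα hβ hγ hsum hne ⊢
    simp only [Set.mem_setOf_eq, SS, TT] at *
    have hmem : mp β ∈ β := mp_mem hne
    have hmp7 : 7 ≤ mp β := (hβ _ hmem).2
    have h1 : mp β + (β.erase (mp β)).sum = β.sum := by
      have := congrArg Multiset.sum (Multiset.cons_erase hmem)
      rwa [Multiset.sum_cons] at this
    refine ⟨⟨hα, ?_, hγ, ?_⟩, mp β - 3, Multiset.mem_cons_self _ _, ?_, ?_⟩
    · intro p hp
      rcases Multiset.mem_cons.1 hp with rfl | hp'
      · have := (hβ _ hmem).1; omega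
      · have := hβ _ (Multiset.mem_of_mem_erase hp'); omega
    · rw [Multiset.sum_cons, Nat.cast_add, Nat.cast_sub (by omega : 3 ≤ mp β)]
      have h2 : ((mp β : ℤ)) + ((β.erase (mp β)).sum : ℤ) = (β.sum : ℤ) := by
        exact_mod_cast h1
      simp only [Nat.cast_ofNat]
      linarith
    · rw [Multiset.count_cons_self]
      have : mp β - 3 ∉ β.erase (mp β) := by
        intro hc
        have := mp_le (Multiset.mem_of_mem_erase hc)
        omega
      rw [Multiset.count_eq_zero_of_notMem this]
    · intro p hp
      rcases Multiset.mem_cons.1 hp with rfl | hp'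
      · exact le_refl _
      · have := mp_le (Multiset.mem_of_mem_erase hp'); omega
  · obtain ⟨⟨π, μ, δ⟩, hy⟩ := y
    obtain ⟨⟨hπ, hμ, hδ, hsum⟩, s, hs, hc1, hmin⟩ := hy
    dsimp only at hπ hμ hδ hsum hs hc1 hmin ⊢
    simp only [Set.mem_setOf_eq, SS, TT] at *
    have hne : μ ≠ 0 := fun h0 => by rw [h0] at hs; simp at hs
    have hmps : mp μ = s := le_antisymm (mp_le hs) (hmin _ (mp_mem hne))
    have hs4 : 4 ≤ s := (hμ _ hs).2
    have hgt : ∀ p ∈ μ.erase s, s + 3 ≤ p := by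
      intro p hp
      have hpm := Multiset.mem_of_mem_erase hp
      have hne' : p ≠ s := by
        intro h; subst h
        have := Multiset.count_pos.2 hp
        rw [Multiset.count_erase_self, hc1] at this; omega
      have h1 := (hμ _ hpm).1
      have h2 := (hμ _ hs).1
      have := hmin _ hpm
      omega
    rw [hmps]
    have h1 : s + (μ.erase s).sum = μ.sum := by
      have := congrArg Multiset.sum (Multiset.cons_erase hs)
      rwa [Multiset.sum_cons] at this
    refine ⟨⟨hπ, ?_, hδ, ?_⟩, Multiset.cons_ne_zero⟩
    · intro p hp
      rcases Multiset.mem_cons.1 hp with rfl | hp'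
      · have := (hμ _ hs).1; constructor <;> omega
      · have ha := hμ _ (Multiset.mem_of_mem_erase hp')
        have := hgt _ hp'
        constructor <;> omega
    · rw [Multiset.sum_cons, Nat.cast_add]
      have h2 : ((s : ℤ)) + ((μ.erase s).sum : ℤ) = (μ.sum : ℤ) := by exact_mod_cast h1
      rw [Nat.cast_add]
      simp only [Nat.cast_ofNat]
      linarith
  · rintro ⟨⟨α, β, γ⟩, ⟨hα, hβ, hγ, hsum⟩, hne⟩
    apply Subtype.ext
    dsimp only at hβ hne ⊢
    have hmem : mp β ∈ β := mp_mem hne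
    have hmp7 : 7 ≤ mp β := (hβ _ hmem).2
    have hmin' : mp ((mp β - 3) ::ₘ β.erase (mp β)) = mp β - 3 := by
      apply mp_cons_eq
      intro p hp
      have := mp_le (Multiset.mem_of_mem_erase hp); omega
    rw [hmin', Multiset.erase_cons_head, show mp β - 3 + 3 = mp β by omega,
        Multiset.cons_erase hmem]
  · rintro ⟨⟨π, μ, δ⟩, ⟨hπ, hμ, hδ, hsum⟩, s, hs, hc1, hmin⟩
    apply Subtype.ext
    dsimp only at hμ hs hc1 hmin ⊢
    have hne : μ ≠ 0 := fun h0 => by rw [h0] at hs; simp at hs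
    have hmps : mp μ = s := le_antisymm (mp_le hs) (hmin _ (mp_mem hne))
    have hs4 : 4 ≤ s := (hμ _ hs).2
    have hgt : ∀ p ∈ μ.erase s, s + 3 ≤ p := by
      intro p hp
      have hpm := Multiset.mem_of_mem_erase hp
      have hne' : p ≠ s := by
        intro h; subst h
        have := Multiset.count_pos.2 hp
        rw [Multiset.count_erase_self, hc1] at this; omega
      have h1 := (hμ _ hpm).1
      have h2 := (hμ _ hs).1
      have := hmin _ hpm
      omega
    rw [hmps]
    have hmin' : mp ((s + 3) ::ₘ μ.erase s) = s + 3 := mp_cons_eq hgt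
    rw [hmin', Multiset.erase_cons_head, show s + 3 - 3 = s by omega,
        Multiset.cons_erase hs]
end

section
/- For every nonnegative integer n, the set T_2(n) of triples (α,β,γ) ∈ T(n) such that β is empty and the largest part of α is at least 5 and occurs exactly once in α has the same cardinality as the set S_2(n−3) of triples (π,μ,δ) ∈ S(n−3) such that μ is empty and π is nonempty. -/
lemma my_sup_mem (s : Multiset ℕ) (hs : s ≠ 0) : s.sup ∈ s := by
  induction s using Multiset.induction with
  | empty => simp at hs
  | cons a t ih =>
    rw [Multiset.sup_cons]
    rcases eq_or_ne t 0 with rfl | ht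
    · simp
    · rcases le_total a t.sup with h | h
      · rw [sup_eq_right.mpr h]; exact Multiset.mem_cons_of_mem (ih ht)
      · rw [sup_eq_left.mpr h]; exact Multiset.mem_cons_self a t

def fm (s : Multiset ℕ) : Multiset ℕ := (s.sup - 3) ::ₘ s.erase s.sup
def gm (s : Multiset ℕ) : Multiset ℕ := (s.sup + 3) ::ₘ s.erase s.sup

/-- `T_2(n)` (triples in `T(n)` with `β = ∅` and the largest part of `α` at least `5`
and occurring exactly once) has the same cardinality as `S_2(n-3)` (triples in `S(n-3)`
with `μ = ∅` and `π ≠ ∅`). -/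
theorem card_T2_eq_card_S2 (n : ℕ) :
    Nat.card {x | x ∈ TT (n : ℤ) ∧ x.2.1 = 0 ∧
        ∃ a ∈ x.1, 5 ≤ a ∧ x.1.count a = 1 ∧ ∀ p ∈ x.1, p ≤ a} =
      Nat.card {x | x ∈ SS ((n : ℤ) - 3) ∧ x.2.1 = 0 ∧ x.1 ≠ 0} := by
  -- helper facts
  have supA : ∀ (s : Multiset ℕ) (a : ℕ), a ∈ s → (∀ p ∈ s, p ≤ a) → s.sup = a := by
    intro s a ha hle
    exact le_antisymm (Multiset.sup_le.mpr hle) (Multiset.le_sup ha)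
  apply Nat.card_congr
  refine ⟨fun x => ⟨(fm x.1.1, x.1.2.1, x.1.2.2), ?_⟩,
    fun y => ⟨(gm y.1.1, y.1.2.1, y.1.2.2), ?_⟩, ?_, ?_⟩
  · -- forward membership
    obtain ⟨x, ⟨h1, h2, h3, h4⟩, hb, a, ha, ha5, hc, hle⟩ := x
    have hsup : x.1.sup = a := supA x.1 a ha hle
    have hmod := h1 a ha
    have hnotin : a ∉ x.1.erase a := by
      intro h
      have := Multiset.count_pos.mpr h
      rw [Multiset.count_erase_self, hc] at this
      omega
    simp only [fm, hsup]
    refine ⟨⟨?_, ?_, h3, ?_⟩, hb, by simp [fm]⟩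
    · intro p hp
      rcases Multiset.mem_cons.mp hp with rfl | hp
      · omega
      · exact h1 p (Multiset.mem_of_mem_erase hp)
    · intro p hp; rw [hb] at hp; exact absurd hp (Multiset.notMem_zero p)
    · have hs : x.1.sum = a + (x.1.erase a).sum := by
        conv_lhs => rw [← Multiset.cons_erase ha]
        simp [Multiset.sum_cons]
      dsimp only
      rw [Multiset.sum_cons]
      omega
  · -- backward membership
    obtain ⟨y, ⟨h1, h2, h3, h4⟩, hb, hne⟩ := y
    set b := y.1.sup with hbdef
    have hbm : b ∈ y.1 := my_sup_mem y.1 hne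
    have hbmod := h1 b hbm
    simp only [gm]
    refine ⟨⟨?_, ?_, h3, ?_⟩, hb, b + 3, Multiset.mem_cons_self _ _, by omega, ?_, ?_⟩
    · intro p hp
      rcases Multiset.mem_cons.mp hp with rfl | hp
      · omega
      · exact h1 p (Multiset.mem_of_mem_erase hp)
    · intro p hp; rw [hb] at hp; simp at hp
    · have hs : y.1.sum = b + (y.1.erase b).sum := by
        conv_lhs => rw [← Multiset.cons_erase hbm]
        simp [Multiset.sum_cons]
      dsimp only
      rw [Multiset.sum_cons, ← hbdef]
      omega
    · -- count = 1
      rw [Multiset.count_cons_self]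
      have : b + 3 ∉ y.1.erase b := by
        intro h
        have := Multiset.le_sup (Multiset.mem_of_mem_erase h)
        omega
      rw [Multiset.count_eq_zero_of_notMem this]
    · intro p hp
      rcases Multiset.mem_cons.mp hp with rfl | hp
      · exact le_rfl
      · have := Multiset.le_sup (Multiset.mem_of_mem_erase hp)
        omega
  · -- left inverse
    rintro ⟨x, ⟨h1, h2, h3, h4⟩, hb, a, ha, ha5, hc, hle⟩
    have hsup : x.1.sup = a := supA x.1 a ha hle
    have hmoda := h1 a ha
    have hnotin : a ∉ x.1.erase a := by
      intro h
      have := Multiset.count_pos.mpr h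
      rw [Multiset.count_erase_self, hc] at this
      omega
    ext : 1
    simp only [Subtype.mk.injEq]
    have hsup2 : (fm x.1).sup = a - 3 := by
      apply supA
      · simp [fm, hsup]
      · intro p hp
        simp only [fm, hsup] at hp
        rcases Multiset.mem_cons.mp hp with rfl | hp
        · exact le_rfl
        · have hple := hle p (Multiset.mem_of_mem_erase hp)
          have hpm := h1 p (Multiset.mem_of_mem_erase hp)
          have hpa : p ≠ a := fun h => hnotin (h ▸ hp)
          omega
    have key : gm (fm x.1) = x.1 := by
      simp only [gm]
      rw [hsup2]
      simp only [fm, hsup]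
      rw [Multiset.erase_cons_head]
      have : a - 3 + 3 = a := by omega
      rw [this, Multiset.cons_erase ha]
    rw [key]
  · -- right inverse
    rintro ⟨y, ⟨h1, h2, h3, h4⟩, hb, hne⟩
    set b := y.1.sup with hbdef
    have hbm : b ∈ y.1 := my_sup_mem y.1 hne
    ext : 1
    simp only [Subtype.mk.injEq]
    have hsup2 : (gm y.1).sup = b + 3 := by
      apply supA
      · simp [gm, hbdef]
      · intro p hp
        simp only [gm] at hp
        rcases Multiset.mem_cons.mp hp with rfl | hp
        · exact le_rfl
        · have := Multiset.le_sup (Multiset.mem_of_mem_erase hp)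
          omega
    have key : fm (gm y.1) = y.1 := by
      simp only [fm]
      rw [hsup2]
      simp only [gm]
      rw [Multiset.erase_cons_head]
      have : b + 3 - 3 = b := by omega
      rw [this, Multiset.cons_erase hbm]
    rw [key]
end

section
/- For every nonnegative integer n, the set T_3(n) of triples (α,β,γ) ∈ T(n) such that β is empty and the largest part of α is at least 11 and occurs at least twice in α has the same cardinality as the set S_3(n−3) of triples (π,μ,δ) ∈ S(n−3) such that μ has exactly four parts, exactly three of which equal 4, and the largest part μ_1 of μ is odd, satisfies μ_1 ≥ 7, and satisfies μ_1 ≥ 2π_1 − 15 where π_1 is the largest part of π (with π_1 = 0 if π is empty). -/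
open Multiset

lemma sup_4443 (m : ℕ) (hm : 7 ≤ m) :
    (4 ::ₘ 4 ::ₘ 4 ::ₘ ({m} : Multiset ℕ)).sup = m := by
  simp [Multiset.sup_cons, Multiset.sup_singleton]
  omega

lemma count_4443 (m : ℕ) (hm : 7 ≤ m) :
    (4 ::ₘ 4 ::ₘ 4 ::ₘ ({m} : Multiset ℕ)).count 4 = 3 := by
  simp [Multiset.count_cons, Multiset.count_singleton]
  omega

lemma mu_struct (μ : Multiset ℕ) (hcard : Multiset.card μ = 4) (hcount : μ.count 4 = 3)
    (hsup : 7 ≤ μ.sup) : μ = 4 ::ₘ 4 ::ₘ 4 ::ₘ {μ.sup} := by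
  have hle : Multiset.replicate 3 4 ≤ μ := by
    rw [← Multiset.le_count_iff_replicate_le]; omega
  obtain ⟨ν, hν⟩ := Multiset.le_iff_exists_add.mp hle
  have hcν : Multiset.card ν = 1 := by
    have := congrArg Multiset.card hν
    simp [Multiset.card_replicate] at this
    omega
  obtain ⟨x, hx⟩ := Multiset.card_eq_one.mp hcν
  subst hx
  have hx4 : x ≠ 4 := by
    intro h
    rw [hν, h] at hcount
    simp [Multiset.count_replicate] at hcount
  have hsupx : μ.sup = 4 ⊔ x := by
    rw [hν]
    simp [Multiset.sup_add, Multiset.sup_singleton]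
  have hx7 : μ.sup = x := by
    rcases le_total x 4 with h | h
    · rw [hsupx, sup_eq_left.mpr h] at hsup; omega
    · rw [hsupx, sup_eq_right.mpr h]
  rw [hx7, hν]
  rfl

set_option maxHeartbeats 1000000 in
/-- `T_3(n)` (triples in `T(n)` with `β = ∅` and the largest part of `α` at least `11` and
occurring at least twice) has the same cardinality as `S_3(n-3)` (triples in `S(n-3)` whose
`μ` has exactly four parts, exactly three of which equal `4`, whose largest part `μ₁` is odd,
satisfies `μ₁ ≥ 7` and `μ₁ ≥ 2π₁ − 15`, where `π₁ = Multiset.sup π` is the largest part of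
`π`, equal to `0` when `π` is empty). -/
theorem card_T3_eq_card_S3 (n : ℕ) :
    Nat.card {x | x ∈ TT (n : ℤ) ∧ x.2.1 = 0 ∧
        11 ≤ x.1.sup ∧ 2 ≤ x.1.count x.1.sup} =
      Nat.card {x | x ∈ SS ((n : ℤ) - 3) ∧
        Multiset.card x.2.1 = 4 ∧ x.2.1.count 4 = 3 ∧
        Odd x.2.1.sup ∧ 7 ≤ x.2.1.sup ∧
        2 * (x.1.sup : ℤ) - 15 ≤ (x.2.1.sup : ℤ)} := by
  apply Nat.card_congr
  refine ⟨fun x => ⟨((x.1.1.erase x.1.1.sup).erase x.1.1.sup,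
      4 ::ₘ 4 ::ₘ 4 ::ₘ {2 * x.1.1.sup - 15}, x.1.2.2), ?_⟩,
    fun y => ⟨(((y.1.2.1.sup + 15) / 2) ::ₘ ((y.1.2.1.sup + 15) / 2) ::ₘ y.1.1, 0, y.1.2.2), ?_⟩,
    ?_, ?_⟩
  · -- forward membership
    obtain ⟨⟨α, β, γ⟩, ⟨h1, h2, h3, hsum⟩, hβ, hsup, hcount⟩ := x
    dsimp only at h1 h2 h3 hsum hβ hsup hcount ⊢
    set a := α.sup with ha
    have hmem : a ∈ α := by rw [← Multiset.count_pos]; omega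
    have hmem2 : a ∈ α.erase a := by
      rw [← Multiset.count_pos, Multiset.count_erase_self]; omega
    set π := (α.erase a).erase a with hπ
    have hα : α = a ::ₘ a ::ₘ π := by
      rw [hπ, Multiset.cons_erase hmem2, Multiset.cons_erase hmem]
    have ha3 : a % 3 = 2 := h1 a hmem
    have hπsup : π.sup ≤ a := by
      apply Multiset.sup_le.mpr
      intro b hb
      exact Multiset.le_sup (Multiset.mem_of_mem_erase (Multiset.mem_of_mem_erase hb))
    have hαsum : α.sum = a + a + π.sum := by rw [hα]; simp [Multiset.sum_cons]; ring
    have hβ0 : β.sum = 0 := by rw [hβ]; simp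
    refine ⟨⟨?_, ?_, h3, ?_⟩, ?_, ?_, ?_, ?_, ?_⟩
    · intro p hp
      exact h1 p (Multiset.mem_of_mem_erase (Multiset.mem_of_mem_erase hp))
    · intro p hp
      simp only [Multiset.mem_cons, Multiset.mem_singleton] at hp
      rcases hp with h | h | h | h <;> subst h <;> constructor <;> omega
    · have hμs : (4 ::ₘ 4 ::ₘ 4 ::ₘ ({2 * a - 15} : Multiset ℕ)).sum = 2 * a - 3 := by
        simp [Multiset.sum_cons]; omega
      rw [hμs]
      rw [hαsum, hβ0] at hsum
      push_cast at hsum ⊢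
      omega
    · simp
    · exact count_4443 _ (by omega)
    · rw [sup_4443 _ (by omega)]
      exact ⟨a - 8, by omega⟩
    · rw [sup_4443 _ (by omega)]; omega
    · rw [sup_4443 _ (by omega)]
      push_cast
      omega
  · -- backward membership
    obtain ⟨⟨π, μ, δ⟩, ⟨h1, h2, h3, hsum⟩, hcard, hcount, hodd, hsup7, hineq⟩ := y
    dsimp only at h1 h2 h3 hsum hcard hcount hodd hsup7 hineq ⊢
    set m := μ.sup with hm
    set a := (m + 15) / 2 with ha
    have hμ : μ = 4 ::ₘ 4 ::ₘ 4 ::ₘ {m} := mu_struct μ hcard hcount hsup7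
    have hmmem : m ∈ μ := by rw [hμ]; simp
    have hm3 : m % 3 = 1 := (h2 m hmmem).1
    have h2a : 2 * a = m + 15 := by
      obtain ⟨k, hk⟩ := hodd; omega
    have hπa : π.sup ≤ a := by
      have : 2 * π.sup ≤ m + 15 := by exact_mod_cast by linarith [hineq]
      omega
    have hμsum : μ.sum = 12 + m := by rw [hμ]; simp [Multiset.sum_cons]; omega
    refine ⟨⟨?_, ?_, h3, ?_⟩, ?_, ?_, ?_⟩
    · intro p hp
      simp only [Multiset.mem_cons] at hp
      rcases hp with h | h | h
      · subst h; omega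
      · subst h; omega
      · exact h1 p h
    · intro p hp; simp at hp
    · rw [hμsum] at hsum
      simp only [Multiset.sum_cons, Multiset.sum_zero]
      push_cast at hsum ⊢
      omega
    · rfl
    · rw [Multiset.sup_cons, Multiset.sup_cons, sup_eq_left.mpr hπa, sup_idem]
      omega
    · have hsupeq : (a ::ₘ a ::ₘ π).sup = a := by
        rw [Multiset.sup_cons, Multiset.sup_cons, sup_eq_left.mpr hπa, sup_idem]
      rw [hsupeq]
      simp [Multiset.count_cons_self]
  · -- left inverse
    rintro ⟨⟨α, β, γ⟩, ⟨h1, h2, h3, hsum⟩, hβ, hsup, hcount⟩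
    apply Subtype.ext
    dsimp only at h1 h2 h3 hsum hβ hsup hcount ⊢
    set a := α.sup with ha
    have hmem : a ∈ α := by rw [← Multiset.count_pos]; omega
    have hmem2 : a ∈ α.erase a := by
      rw [← Multiset.count_pos, Multiset.count_erase_self]; omega
    have hsupμ : (4 ::ₘ 4 ::ₘ 4 ::ₘ ({2 * a - 15} : Multiset ℕ)).sup = 2 * a - 15 :=
      sup_4443 _ (by omega)
    rw [hsupμ]
    have h2a : (2 * a - 15 + 15) / 2 = a := by omega
    rw [h2a]
    refine Prod.ext ?_ (Prod.ext ?_ rfl)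
    · dsimp only
      rw [Multiset.cons_erase hmem2, Multiset.cons_erase hmem]
    · exact hβ.symm
  · -- right inverse
    rintro ⟨⟨π, μ, δ⟩, ⟨h1, h2, h3, hsum⟩, hcard, hcount, hodd, hsup7, hineq⟩
    apply Subtype.ext
    dsimp only at h1 h2 h3 hsum hcard hcount hodd hsup7 hineq ⊢
    set m := μ.sup with hm
    set a := (m + 15) / 2 with ha
    have hμ : μ = 4 ::ₘ 4 ::ₘ 4 ::ₘ {m} := mu_struct μ hcard hcount hsup7
    have h2a : 2 * a = m + 15 := by
      obtain ⟨k, hk⟩ := hodd; omega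
    have hπa : π.sup ≤ a := by
      have : 2 * π.sup ≤ m + 15 := by exact_mod_cast by linarith [hineq]
      omega
    have hsupeq : (a ::ₘ a ::ₘ π).sup = a := by
      rw [Multiset.sup_cons, Multiset.sup_cons, sup_eq_left.mpr hπa, sup_idem]
    rw [hsupeq]
    refine Prod.ext ?_ (Prod.ext ?_ rfl)
    · dsimp only
      rw [Multiset.erase_cons_head, Multiset.erase_cons_head]
    · dsimp only
      have hma : 2 * a - 15 = m := by omega
      rw [hμ, ← hma]
end

section
/- For every nonnegative integer n, the set T_6(n) of triples (α,β,γ) ∈ T(n) such that β is empty, γ has at most three parts equal to 6 and at least two parts equal to 9, and α satisfies condition (C) has the same cardinality as the set S_6(n−3) of triples (π,μ,δ) ∈ S(n−3) such that μ is the partition (7,4,4), δ has at most three parts equal to 6, and π satisfies condition (C). Here a partition λ satisfies condition (C) if λ is empty, or λ is the single-part partition (2), or the largest part of λ is at most 5 and occurs at least twice in λ. -/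
/-- Condition (C): the partition `l` is empty, or equals `(2)`, or its largest part is at
most `5` and occurs at least twice. -/
def CondC (l : Multiset ℕ) : Prop :=
  l = 0 ∨ l = {2} ∨ (l.sup ≤ 5 ∧ 2 ≤ l.count l.sup)

/-- `T_6(n)` (triples in `T(n)` with `β = ∅`, at most three parts of `γ` equal to `6`, at
least two parts of `γ` equal to `9`, and `α` satisfying condition (C)) has the same
cardinality as `S_6(n-3)` (triples in `S(n-3)` with `μ = (7,4,4)`, at most three parts of
`δ` equal to `6`, and `π` satisfying condition (C)). -/
theorem card_T6_eq_card_S6 (n : ℕ) :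
    Nat.card {x | x ∈ TT (n : ℤ) ∧ x.2.1 = 0 ∧ x.2.2.count 6 ≤ 3 ∧ 2 ≤ x.2.2.count 9 ∧
        CondC x.1} =
      Nat.card {x | x ∈ SS ((n : ℤ) - 3) ∧ x.2.1 = {7, 4, 4} ∧ x.2.2.count 6 ≤ 3 ∧
        CondC x.1} := by
  apply Nat.card_congr
  refine ⟨fun x => ⟨(x.1.1, ({7,4,4} : Multiset ℕ), x.1.2.2 - {9,9}), ?_⟩,
          fun y => ⟨(y.1.1, (0 : Multiset ℕ), y.1.2.2 + {9,9}), ?_⟩, ?_, ?_⟩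
  · obtain ⟨⟨h1, h2, h3, h4⟩, hb, h6, h9, hc⟩ := x.2
    have hle : ({9,9} : Multiset ℕ) ≤ x.1.2.2 := by
      have : Multiset.replicate 2 9 ≤ x.1.2.2 :=
        (Multiset.le_count_iff_replicate_le).mp h9
      simpa using this
    have hsum : x.1.2.2.sum = (x.1.2.2 - {9,9}).sum + 18 := by
      conv_lhs => rw [← tsub_add_cancel_of_le hle]
      rw [Multiset.sum_add]; rfl
    refine ⟨⟨h1, ?_, fun p hp => h3 p (Multiset.mem_of_le tsub_le_self hp), ?_⟩,
      rfl, ?_, hc⟩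
    · intro p hp
      simp only [Multiset.mem_cons, Multiset.mem_singleton,
        Multiset.insert_eq_cons] at hp
      rcases hp with h | h | h <;> subst h <;> exact ⟨by norm_num, by norm_num⟩
    · rw [hb] at h4
      simp only [Multiset.sum_zero, Nat.cast_zero, add_zero] at h4
      have h15 : ((({7,4,4} : Multiset ℕ)).sum : ℤ) = 15 := by decide
      have hz : ((x.1.2.2.sum : ℕ) : ℤ) = ((x.1.2.2 - {9,9}).sum : ℤ) + 18 := by
        exact_mod_cast hsum
      rw [h15]
      linarith
    · rw [Multiset.count_sub]
      simpa using h6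
  · obtain ⟨⟨h1, h2, h3, h4⟩, hb, h6, hc⟩ := y.2
    refine ⟨⟨h1, by simp, fun p hp => ?_, ?_⟩, rfl, ?_, ?_, hc⟩
    · rcases Multiset.mem_add.mp hp with h | h
      · exact h3 p h
      · right; simpa using h
    · rw [hb] at h4
      have h15 : ((({7,4,4} : Multiset ℕ)).sum : ℤ) = 15 := by decide
      rw [h15] at h4
      have hz : (((y.1.2.2 + {9,9}).sum : ℕ) : ℤ) = ((y.1.2.2.sum : ℕ) : ℤ) + 18 := by
        have : (y.1.2.2 + {9,9}).sum = y.1.2.2.sum + 18 := by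
          rw [Multiset.sum_add]; rfl
        exact_mod_cast this
      simp only [Multiset.sum_zero, Nat.cast_zero, add_zero]
      linarith
    · rw [Multiset.count_add]
      simpa using h6
    · rw [Multiset.count_add]
      simp
  · rintro ⟨⟨a, b, g⟩, ⟨h1, hb, h6, h9, hc⟩⟩
    have hle : ({9,9} : Multiset ℕ) ≤ g := by
      have : Multiset.replicate 2 9 ≤ g :=
        (Multiset.le_count_iff_replicate_le).mp h9
      simpa using this
    exact Subtype.ext (Prod.ext rfl (Prod.ext hb.symm (tsub_add_cancel_of_le hle)))
  · rintro ⟨⟨a, b, g⟩, ⟨h1, hb, h6, hc⟩⟩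
    exact Subtype.ext (Prod.ext rfl (Prod.ext hb.symm (by simp)))
end

section
/- Let a and b be coprime positive integers and let n be a nonnegative integer. Let t_{a,b}(n) denote the number of pairs (x,y) of nonnegative integers with ax + by = n. Then ⌊(⌊n/a⌋ + 1)/b⌋ ≤ t_{a,b}(n) ≤ ⌈(⌊n/a⌋ + 1)/b⌉. -/
/-- Counting a residue class `r` (with `r < b`) inside `Finset.range N`. -/
lemma count_residue_class (b N r K : ℕ) (hb : 0 < b) (hr : r < b)
    (h1 : b * K ≤ N - r + (b - 1)) (h2 : N - r + (b - 1) < b * K + b) :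
    ((Finset.range N).filter (fun x => x % b = r)).card = K := by
  have key : ∀ k, r + b * k < N ↔ k < K := by
    intro k
    constructor
    · intro h
      by_contra hk
      push_neg at hk
      have h3 : b * K ≤ b * k := Nat.mul_le_mul_left b hk
      omega
    · intro h
      have h3 : b * (k + 1) ≤ b * K := Nat.mul_le_mul_left b h
      have h4 : b * (k + 1) = b * k + b := by ring
      omega
  have hinj : Function.Injective (fun k => r + b * k) := by
    intro k1 k2 h
    have h' : r + b * k1 = r + b * k2 := h
    exact Nat.eq_of_mul_eq_mul_left hb (by omega)
  have himg : (Finset.range N).filter (fun x => x % b = r) =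
      (Finset.range K).image (fun k => r + b * k) := by
    ext x
    simp only [Finset.mem_filter, Finset.mem_range, Finset.mem_image]
    constructor
    · rintro ⟨hxN, hxr⟩
      have hdm := Nat.div_add_mod x b
      refine ⟨x / b, ?_, by omega⟩
      exact (key (x / b)).mp (by omega)
    · rintro ⟨k, hk, rfl⟩
      refine ⟨(key k).mpr hk, ?_⟩
      rw [Nat.add_mul_mod_self_left, Nat.mod_eq_of_lt hr]
  rw [himg, Finset.card_image_of_injective _ hinj, Finset.card_range]

/-- For coprime positive integers `a, b` and `n ≥ 0`, the number `t_{a,b}(n)` of pairs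
`(x, y)` of nonnegative integers with `ax + by = n` satisfies
`⌊(⌊n/a⌋ + 1)/b⌋ ≤ t_{a,b}(n) ≤ ⌈(⌊n/a⌋ + 1)/b⌉`. -/
theorem t_ab_bounds (a b : ℕ) (ha : 0 < a) (hb : 0 < b) (hab : Nat.Coprime a b) (n : ℕ) :
    ⌊(((⌊(n : ℚ) / (a : ℚ)⌋ : ℚ) + 1) / (b : ℚ))⌋ ≤
        (Nat.card {p : ℕ × ℕ | a * p.1 + b * p.2 = n} : ℤ) ∧
      (Nat.card {p : ℕ × ℕ | a * p.1 + b * p.2 = n} : ℤ) ≤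
        ⌈(((⌊(n : ℚ) / (a : ℚ)⌋ : ℚ) + 1) / (b : ℚ))⌉ := by
  haveI : NeZero b := ⟨hb.ne'⟩
  obtain ⟨N, hN⟩ : ∃ N, N = n / a + 1 := ⟨_, rfl⟩
  -- the distinguished residue x0
  obtain ⟨x0, hx0b, hx0⟩ : ∃ x0, x0 < b ∧ ∀ x : ℕ, (a * x % b = n % b) ↔ x % b = x0 := by
    set u := ZMod.unitOfCoprime a hab with hu
    set z : ZMod b := ((u⁻¹ : (ZMod b)ˣ) : ZMod b) * (n : ZMod b) with hz
    refine ⟨z.val, ZMod.val_lt z, fun x => ?_⟩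
    have hx0cast : ((z.val : ℕ) : ZMod b) = z := by
      rw [ZMod.natCast_val, ZMod.cast_id]
    have h1 : (a * x % b = n % b) ↔ ((a * x : ℕ) : ZMod b) = (n : ZMod b) :=
      (ZMod.natCast_eq_natCast_iff _ _ _).symm
    have h2 : (x % b = z.val) ↔ ((x : ℕ) : ZMod b) = ((z.val : ℕ) : ZMod b) := by
      rw [ZMod.natCast_eq_natCast_iff]
      unfold Nat.ModEq
      rw [Nat.mod_eq_of_lt (ZMod.val_lt z)]
    rw [h1, h2, hx0cast, hz]
    push_cast
    rw [← ZMod.coe_unitOfCoprime a hab, ← hu]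
    constructor
    · intro h
      rw [← h, ← mul_assoc, ← Units.val_mul, inv_mul_cancel, Units.val_one, one_mul]
    · intro h
      rw [h, ← mul_assoc, ← Units.val_mul, mul_inv_cancel, Units.val_one, one_mul]
  -- the cardinality equals the count of the residue class in range N
  have hcard : Nat.card {p : ℕ × ℕ | a * p.1 + b * p.2 = n} =
      ((Finset.range N).filter (fun x => x % b = x0)).card := by
    have hset : {p : ℕ × ℕ | a * p.1 + b * p.2 = n} =
        ↑(((Finset.range N).filter (fun x => x % b = x0)).image
          (fun x => (x, (n - a * x) / b))) := by
      ext ⟨x, y⟩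
      simp only [Set.mem_setOf_eq, Finset.coe_image, Set.mem_image, Finset.mem_coe,
        Finset.mem_filter, Finset.mem_range, Prod.mk.injEq]
      constructor
      · intro h
        have hax : a * x ≤ n := by omega
        have hxN : x < N := by
          have : x ≤ n / a := Nat.le_div_iff_mul_le ha |>.mpr
            (by rw [mul_comm x a]; exact hax)
          omega
        have hmod : a * x % b = n % b := by
          conv_rhs => rw [← h]
          rw [Nat.add_mul_mod_self_left]
        have hy : (n - a * x) / b = y := by
          have h1 : n - a * x = b * y := by omega
          rw [h1, Nat.mul_div_cancel_left _ hb]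
        exact ⟨x, ⟨hxN, (hx0 x).mp hmod⟩, rfl, hy⟩
      · rintro ⟨x', ⟨hx'N, hx'mod⟩, rfl, rfl⟩
        have hmod : a * x' % b = n % b := (hx0 x').mpr hx'mod
        have hax : a * x' ≤ n := by
          have h1 : x' ≤ n / a := by omega
          calc a * x' = x' * a := mul_comm _ _
            _ ≤ n := (Nat.le_div_iff_mul_le ha).mp h1
        have hdvd : b ∣ (n - a * x') := (Nat.modEq_iff_dvd' hax).mp hmod
        rw [Nat.mul_div_cancel' hdvd]
        omega
    rw [hset, Nat.card_coe_set_eq, Set.ncard_coe_finset,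
      Finset.card_image_of_injective _ (fun x1 x2 h => congrArg Prod.fst h)]
  obtain ⟨C, hC⟩ : ∃ C, C = (N - x0 + (b - 1)) / b := ⟨_, rfl⟩
  have hdC := Nat.div_add_mod (N - x0 + (b - 1)) b
  have hmC := Nat.mod_lt (N - x0 + (b - 1)) hb
  have hcardC : Nat.card {p : ℕ × ℕ | a * p.1 + b * p.2 = n} = C := by
    rw [hcard]
    exact count_residue_class b N x0 C hb hx0b (by rw [hC]; omega) (by rw [hC]; omega)
  -- numeric bounds on C
  have hlow : N / b ≤ C := by
    rcases lt_or_ge x0 N with h | h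
    · rw [hC]; exact Nat.div_le_div_right (by omega)
    · have hz : N / b = 0 := Nat.div_eq_of_lt (by omega)
      omega
  have hupN : C ≤ (N + (b - 1)) / b := by
    rw [hC]; exact Nat.div_le_div_right (by omega)
  have hupmul : C * b ≤ N + (b - 1) := (Nat.le_div_iff_mul_le hb).mp hupN
  -- convert the rational expression
  have hfloorn : ⌊(n : ℚ) / (a : ℚ)⌋ = ((n / a : ℕ) : ℤ) := by
    have h1 : ((n : ℚ)) = (((n : ℤ) : ℚ)) := by push_cast; ring
    rw [h1, Rat.floor_intCast_div_natCast]
    norm_cast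
  have hq : ((⌊(n : ℚ) / (a : ℚ)⌋ : ℚ) + 1) / (b : ℚ) = (N : ℚ) / (b : ℚ) := by
    rw [hfloorn, hN]
    congr 1
    norm_cast
  rw [hq, hcardC]
  constructor
  · -- floor bound
    have hfl : ⌊(N : ℚ) / (b : ℚ)⌋ = ((N / b : ℕ) : ℤ) := by
      have h1 : ((N : ℚ)) = (((N : ℤ) : ℚ)) := by push_cast; ring
      rw [h1, Rat.floor_intCast_div_natCast]
      norm_cast
    rw [hfl]
    exact_mod_cast hlow
  · -- ceil bound
    rw [Int.le_ceil_iff]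
    have hbQ : (0 : ℚ) < (b : ℚ) := by exact_mod_cast hb
    rw [lt_div_iff₀ hbQ]
    have hkey : (C : ℚ) * b ≤ (N : ℚ) + (b : ℚ) - 1 := by
      have hb1 : (((b : ℕ) - 1 : ℕ) : ℚ) = (b : ℚ) - 1 := by
        have h1 : (1 : ℕ) ≤ b := hb
        push_cast [h1]
        ring
      calc (C : ℚ) * b = ((C * b : ℕ) : ℚ) := by push_cast; ring
        _ ≤ ((N + (b - 1) : ℕ) : ℚ) := by exact_mod_cast hupmul
        _ = (N : ℚ) + (b : ℚ) - 1 := by rw [Nat.cast_add, hb1]; ring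
    push_cast
    nlinarith [hkey, hbQ]
end

section
/- Let a, b, c be positive integers with a and b coprime, and let n be a nonnegative integer. Let t_{a,b,c}(n) denote the number of triples (x,y,z) of nonnegative integers with ax + by + cz = n. Then, as real numbers, t_{a,b,c}(n) ≥ n²/(2abc) − (n/c + 1). -/
open Finset

private lemma sum_id_real (N : ℕ) : ∑ i ∈ Finset.range N, (i : ℝ) = N * (N - 1) / 2 := by
  induction N with
  | zero => simp
  | succ k ih => rw [Finset.sum_range_succ, ih]; push_cast; ring

/-- residue solving `a * u ≡ m [MOD b]`. -/
private def uu (a b m : ℕ) : ℕ := ((m : ZMod b) * (a : ZMod b)⁻¹).val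

private lemma uu_lt (a b m : ℕ) (hb : 0 < b) : uu a b m < b := by
  haveI : NeZero b := ⟨hb.ne'⟩
  exact ZMod.val_lt _

private lemma uu_mod (a b m : ℕ) (hb : 0 < b) (hab : Nat.Coprime a b) :
    a * uu a b m ≡ m [MOD b] := by
  haveI : NeZero b := ⟨hb.ne'⟩
  have h : ((a * uu a b m : ℕ) : ZMod b) = (m : ZMod b) := by
    push_cast [uu]
    rw [ZMod.natCast_val, ZMod.cast_id]
    rw [show (a : ZMod b) * ((m : ZMod b) * (a : ZMod b)⁻¹) =
      (m : ZMod b) * ((a : ZMod b) * (a : ZMod b)⁻¹) from by ring]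
    rw [ZMod.coe_mul_inv_eq_one a hab, mul_one]
  exact (ZMod.natCast_eq_natCast_iff _ _ _).mp h

set_option maxHeartbeats 1000000 in
/-- For positive integers `a, b, c` with `a, b` coprime and `n ≥ 0`, the number
`t_{a,b,c}(n)` of triples `(x, y, z)` of nonnegative integers with `ax + by + cz = n`
satisfies `t_{a,b,c}(n) ≥ n²/(2abc) − (n/c + 1)` as real numbers. -/
theorem t_abc_lower_bound (a b c : ℕ) (ha : 0 < a) (hb : 0 < b) (hc : 0 < c)
    (hab : Nat.Coprime a b) (n : ℕ) :
    (n : ℝ) ^ 2 / (2 * a * b * c) - ((n : ℝ) / c + 1) ≤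
      (Nat.card {x : ℕ × ℕ × ℕ | a * x.1 + b * x.2.1 + c * x.2.2 = n} : ℝ) := by
  have hab0 : 0 < a * b := Nat.mul_pos ha hb
  set K := n / c with hK
  set mf : ℕ → ℕ := fun z => n - c * z with hmf
  set J : ℕ → ℕ := fun z =>
    if a * uu a b (mf z) ≤ mf z then (mf z - a * uu a b (mf z)) / (a * b) + 1 else 0 with hJdef
  set T : Finset (ℕ × ℕ × ℕ) :=
    (Finset.range (n+1) ×ˢ Finset.range (n+1) ×ˢ Finset.range (n+1)).filter
      (fun p => a * p.1 + b * p.2.1 + c * p.2.2 = n) with hT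
  -- the set is the finset
  have hSet : {x : ℕ × ℕ × ℕ | a * x.1 + b * x.2.1 + c * x.2.2 = n} = ↑T := by
    ext ⟨x, y, z⟩
    simp only [hT, Set.mem_setOf_eq, Finset.coe_filter, Finset.mem_product, Finset.mem_range,
      Set.mem_setOf_eq]
    constructor
    · intro h
      have hx : x ≤ a * x := Nat.le_mul_of_pos_left x ha
      have hy : y ≤ b * y := Nat.le_mul_of_pos_left y hb
      have hz : z ≤ c * z := Nat.le_mul_of_pos_left z hc
      refine ⟨⟨?_, ?_, ?_⟩, h⟩ <;> · rw [Nat.lt_succ_iff]; linarith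
    · exact fun h => h.2
  have hcard : (Nat.card {x : ℕ × ℕ × ℕ | a * x.1 + b * x.2.1 + c * x.2.2 = n}) = T.card := by
    rw [hSet, Nat.card_coe_set_eq, Set.ncard_coe_finset]
  -- the injection
  set D : Finset ((_ : ℕ) × ℕ) := (Finset.range (K+1)).sigma (fun z => Finset.range (J z))
    with hD
  set g : ((_ : ℕ) × ℕ) → ℕ × ℕ × ℕ := fun p =>
    (uu a b (mf p.1) + p.2 * b, (mf p.1 - a * (uu a b (mf p.1) + p.2 * b)) / b, p.1) with hg
  have hcz : ∀ z ≤ K, c * z ≤ n := by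
    intro z hz
    calc c * z ≤ c * K := Nat.mul_le_mul_left c hz
    _ = K * c := mul_comm _ _
    _ ≤ n := Nat.div_mul_le_self n c
  have hmaps : ∀ p ∈ D, g p ∈ T := by
    rintro ⟨z, j⟩ hp
    simp only [hD, Finset.mem_sigma, Finset.mem_range] at hp
    obtain ⟨hz, hj⟩ := hp
    have hz' : z ≤ K := Nat.lt_succ_iff.mp hz
    have hcond : a * uu a b (mf z) ≤ mf z := by
      by_contra hcon
      simp only [hJdef, if_neg hcon] at hj
      omega
    have hjq : j ≤ (mf z - a * uu a b (mf z)) / (a * b) := by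
      simp only [hJdef, if_pos hcond] at hj
      omega
    have hjab : j * (a * b) ≤ mf z - a * uu a b (mf z) := (Nat.le_div_iff_mul_le hab0).mp hjq
    have hax : a * (uu a b (mf z) + j * b) ≤ mf z := by
      have h1 : a * (uu a b (mf z) + j * b) = a * uu a b (mf z) + j * (a * b) := by ring
      omega
    have hdvd1 : b ∣ mf z - a * uu a b (mf z) :=
      (Nat.modEq_iff_dvd' hcond).mp (uu_mod a b (mf z) hb hab)
    have hdvd : b ∣ mf z - a * (uu a b (mf z) + j * b) := by
      have heq : mf z - a * (uu a b (mf z) + j * b)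
          = (mf z - a * uu a b (mf z)) - (j * a) * b := by
        have h1 : a * (uu a b (mf z) + j * b) = a * uu a b (mf z) + (j * a) * b := by ring
        have h2 : (j * a) * b = j * (a * b) := by ring
        omega
      rw [heq]
      exact Nat.dvd_sub hdvd1 (Dvd.intro_left _ rfl)
    have hby : b * ((mf z - a * (uu a b (mf z) + j * b)) / b)
        = mf z - a * (uu a b (mf z) + j * b) := Nat.mul_div_cancel' hdvd
    have hsum : a * (uu a b (mf z) + j * b)
        + b * ((mf z - a * (uu a b (mf z) + j * b)) / b) = mf z := by omega
    have hczn : c * z ≤ n := hcz z hz'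
    have hmln : mf z ≤ n := Nat.sub_le _ _
    have hxle : uu a b (mf z) + j * b ≤ n :=
      le_trans (le_trans (Nat.le_mul_of_pos_left _ ha) hax) hmln
    have hyle : (mf z - a * (uu a b (mf z) + j * b)) / b ≤ n := by
      calc (mf z - a * (uu a b (mf z) + j * b)) / b
          ≤ b * ((mf z - a * (uu a b (mf z) + j * b)) / b) := Nat.le_mul_of_pos_left _ hb
        _ = mf z - a * (uu a b (mf z) + j * b) := hby
        _ ≤ mf z := Nat.sub_le _ _
        _ ≤ n := hmln
    have hzle : z ≤ n := le_trans hz' (Nat.div_le_self n c)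
    simp only [hT, hg, Finset.mem_filter, Finset.mem_product, Finset.mem_range]
    refine ⟨⟨Nat.lt_succ_of_le hxle, Nat.lt_succ_of_le hyle, Nat.lt_succ_of_le hzle⟩, ?_⟩
    show a * (uu a b (mf z) + j * b)
        + b * ((mf z - a * (uu a b (mf z) + j * b)) / b) + c * z = n
    rw [hsum]
    show n - c * z + c * z = n
    exact Nat.sub_add_cancel hczn
  have hinj : Set.InjOn g ↑D := by
    rintro ⟨z, j⟩ hp ⟨z', j'⟩ hq hgeq
    simp only [hg, Prod.mk.injEq] at hgeq
    obtain ⟨h1, -, h3⟩ := hgeq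
    subst h3
    have hjb : j * b = j' * b := Nat.add_left_cancel h1
    have hj : j = j' := Nat.eq_of_mul_eq_mul_right hb hjb
    subst hj
    rfl
  have hle : D.card ≤ T.card := Finset.card_le_card_of_injOn g hmaps hinj
  have hDcard : D.card = ∑ z ∈ Finset.range (K+1), J z := by
    rw [hD, Finset.card_sigma]
    simp [Finset.card_range]
  -- per-term lower bound on J
  have hab0' : (0 : ℝ) < (a : ℝ) * b := by positivity
  have hJ : ∀ z, (mf z : ℝ) / (a * b) - 1 ≤ (J z : ℝ) := by
    intro z
    have hult : uu a b (mf z) < b := uu_lt a b (mf z) hb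
    have hau : (a : ℝ) * uu a b (mf z) ≤ (a : ℝ) * b - a := by
      have h1 : (uu a b (mf z) : ℝ) ≤ (b : ℝ) - 1 := by
        have h2 : (uu a b (mf z) : ℝ) + 1 ≤ b := by exact_mod_cast hult
        linarith
      nlinarith [show (0:ℝ) ≤ (a:ℝ) from by positivity]
    by_cases hcond : a * uu a b (mf z) ≤ mf z
    · have hJz : J z = (mf z - a * uu a b (mf z)) / (a * b) + 1 := by
        simp only [hJdef]; rw [if_pos hcond]
      have h5 : a * b * ((mf z - a * uu a b (mf z)) / (a * b))
          + (mf z - a * uu a b (mf z)) % (a * b) = mf z - a * uu a b (mf z) :=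
        Nat.div_add_mod _ _
      have h6 : (mf z - a * uu a b (mf z)) % (a * b) < a * b := Nat.mod_lt _ hab0
      have hcast : ((mf z - a * uu a b (mf z) : ℕ) : ℝ) = (mf z : ℝ) - a * uu a b (mf z) := by
        push_cast [Nat.cast_sub hcond]; ring
      have h5' : (a : ℝ) * b * (((mf z - a * uu a b (mf z)) / (a * b) : ℕ) : ℝ)
          + (((mf z - a * uu a b (mf z)) % (a * b) : ℕ) : ℝ)
          = (mf z : ℝ) - a * uu a b (mf z) := by
        rw [← hcast]; exact_mod_cast h5
      have h6' : (((mf z - a * uu a b (mf z)) % (a * b) : ℕ) : ℝ) < (a : ℝ) * b := by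
        exact_mod_cast h6
      rw [hJz, sub_le_iff_le_add, div_le_iff₀ hab0']
      push_cast
      nlinarith [show (0:ℝ) ≤ (((mf z - a * uu a b (mf z)) % (a * b) : ℕ) : ℝ) from by positivity,
        show (0:ℝ) ≤ (a:ℝ) from by positivity]
    · have hJz : J z = 0 := by simp only [hJdef]; rw [if_neg hcond]
      have hmu : (mf z : ℝ) < (a : ℝ) * uu a b (mf z) := by
        exact_mod_cast Nat.lt_of_not_le hcond
      rw [hJz, Nat.cast_zero, sub_nonpos, div_le_one hab0']
      linarith
  -- the sum of mf over range(K+1)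
  have hmfz : ∀ z ∈ Finset.range (K+1), (mf z : ℝ) = (n : ℝ) - c * z := by
    intro z hz
    rw [Finset.mem_range, Nat.lt_succ_iff] at hz
    have h := hcz z hz
    show ((n - c * z : ℕ) : ℝ) = (n : ℝ) - c * z
    push_cast [Nat.cast_sub h]
    ring
  have hsum1 : ∑ z ∈ Finset.range (K+1), (mf z : ℝ)
      = (K + 1) * n - c * ((K + 1) * K / 2) := by
    rw [Finset.sum_congr rfl hmfz, Finset.sum_sub_distrib, Finset.sum_const, ← Finset.mul_sum,
      sum_id_real, Finset.card_range]
    push_cast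
    ring
  have hmod : n = c * K + n % c := (Nat.div_add_mod n c).symm
  have hmodlt : n % c < c := Nat.mod_lt n hc
  have hmod' : (n : ℝ) = c * K + ((n % c : ℕ) : ℝ) := by exact_mod_cast hmod
  have hmodlt' : ((n % c : ℕ) : ℝ) < c := by exact_mod_cast hmodlt
  have hmodnn : (0 : ℝ) ≤ ((n % c : ℕ) : ℝ) := by positivity
  have hc' : (0 : ℝ) < (c : ℝ) := by exact_mod_cast hc
  have hsum2 : (n : ℝ) ^ 2 / (2 * c) ≤ ∑ z ∈ Finset.range (K+1), (mf z : ℝ) := by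
    rw [hsum1, div_le_iff₀ (by positivity)]
    nlinarith [show (0:ℝ) ≤ (K:ℝ) from by positivity,
      mul_nonneg (show (0:ℝ) ≤ (c:ℝ)*(K:ℝ) + c - (n:ℝ) from by nlinarith)
        (show (0:ℝ) ≤ (n:ℝ) - (c:ℝ)*(K:ℝ) from by nlinarith),
      mul_nonneg hc'.le (show (0:ℝ) ≤ (n:ℝ) from by positivity)]
  have hKc : (K : ℝ) ≤ (n : ℝ) / c := by
    rw [le_div_iff₀ hc']
    linarith
  -- assemble
  have hchain1 : (n : ℝ) ^ 2 / (2 * a * b * c) - ((n : ℝ) / c + 1)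
      ≤ (∑ z ∈ Finset.range (K+1), (mf z : ℝ)) / (a * b) - (K + 1) := by
    have h1 : ((n : ℝ) ^ 2 / (2 * c)) / (a * b) = (n : ℝ) ^ 2 / (2 * a * b * c) := by
      rw [div_div]
      ring_nf
    rw [← h1]
    have h2 : ((n : ℝ) ^ 2 / (2 * c)) / (a * b)
        ≤ (∑ z ∈ Finset.range (K+1), (mf z : ℝ)) / (a * b) :=
      div_le_div_of_nonneg_right hsum2 hab0'.le
    linarith
  have hsum3 : ∑ z ∈ Finset.range (K+1), ((mf z : ℝ) / (a * b) - 1)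
      ≤ ∑ z ∈ Finset.range (K+1), (J z : ℝ) :=
    Finset.sum_le_sum (fun z _ => hJ z)
  have hsplit : ∑ z ∈ Finset.range (K+1), ((mf z : ℝ) / (a * b) - 1)
      = (∑ z ∈ Finset.range (K+1), (mf z : ℝ)) / (a * b) - (K + 1) := by
    rw [Finset.sum_sub_distrib, ← Finset.sum_div, Finset.sum_const, Finset.card_range]
    push_cast
    ring
  have hJcast : (∑ z ∈ Finset.range (K+1), (J z : ℝ)) = (D.card : ℝ) := by
    rw [hDcard]
    push_cast
    ring
  have hTD : (D.card : ℝ) ≤ (T.card : ℝ) := by exact_mod_cast hle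
  rw [hcard]
  linarith
end

section
/- For every integer n ≥ 152, the cardinality of the set T_7(n) of triples (α,β,γ) ∈ T(n) such that β is empty, γ has at most three parts equal to 6 and at most one part equal to 9, and α satisfies condition (C), is at most the cardinality of the set S_7(n−3) of triples (π,μ,δ) ∈ S(n−3) such that every part of π equals 2, every part of μ equals 4 or 7 with at least four parts of μ equal to 4, and δ is empty. Here a partition λ satisfies condition (C) if λ is empty, or λ is the single-part partition (2), or the largest part of λ is at most 5 and occurs at least twice in λ. -/
namespace CardT7S7Aux

lemma two_val (u v : ℕ) (huv : u ≠ v) (m : Multiset ℕ) (h : ∀ p ∈ m, p = u ∨ p = v) :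
    m = Multiset.replicate (m.count u) u + Multiset.replicate (m.count v) v := by
  rw [Multiset.ext]
  intro q
  rw [Multiset.count_add, Multiset.count_replicate, Multiset.count_replicate]
  by_cases hqu : q = u
  · subst hqu; simp [Ne.symm huv]
  · by_cases hqv : q = v
    · subst hqv; simp [huv, Ne.symm hqu]
    · have : q ∉ m := fun hq => by rcases h q hq with h'|h' <;> simp_all
      simp [Ne.symm hqu, Ne.symm hqv, Multiset.count_eq_zero.mpr this]

lemma rep_sum (k x : ℕ) : (Multiset.replicate k x).sum = k * x := by
  simp [Multiset.sum_replicate]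

def Lf : ℕ → ℕ → ℕ
  | 0, 0 => 0 | 1, 0 => 0 | 2, 0 => 1 | 3, 0 => 2
  | 0, 1 => 1 | 1, 1 => 2 | 2, 1 => 3 | 3, 1 => 3
  | _, _ => 0

def Df : ℕ → ℕ → ℕ
  | 0, 0 => 0 | 1, 0 => 1 | 2, 0 => 1 | 3, 0 => 1
  | 0, 1 => 0 | 1, 1 => 0 | 2, 1 => 0 | 3, 1 => 1
  | _, _ => 0

def enc (n i j a6 a9 : ℕ) : ℕ × ℕ :=
  if 20 ≤ i then (4 + 2*(j/2) + Df a6 a9, (n+1) % 2 + 2 * Lf a6 a9)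
  else (4 + Df a6 a9 + 2*(i/5), (n+1) % 2 + 8 + 2 * Lf a6 a9)

lemma enc_spec (n i j a6 a9 : ℕ) (h : 2*i + 5*j + 6*a6 + 9*a9 = n)
    (h6 : a6 ≤ 3) (h9 : a9 ≤ 1) (hn : 152 ≤ n) :
    4 ≤ (enc n i j a6 a9).1 ∧
    4*(enc n i j a6 a9).1 + 7*(enc n i j a6 a9).2 + 3 ≤ n ∧
    (n - 3 - (4*(enc n i j a6 a9).1 + 7*(enc n i j a6 a9).2)) % 2 = 0 := by
  unfold enc
  split <;>
    (interval_cases a6 <;> interval_cases a9 <;>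
      simp only [show Lf 0 0 = 0 from rfl, show Lf 1 0 = 0 from rfl, show Lf 2 0 = 1 from rfl,
        show Lf 3 0 = 2 from rfl, show Lf 0 1 = 1 from rfl, show Lf 1 1 = 2 from rfl,
        show Lf 2 1 = 3 from rfl, show Lf 3 1 = 3 from rfl,
        show Df 0 0 = 0 from rfl, show Df 1 0 = 1 from rfl, show Df 2 0 = 1 from rfl,
        show Df 3 0 = 1 from rfl, show Df 0 1 = 0 from rfl, show Df 1 1 = 0 from rfl,
        show Df 2 1 = 0 from rfl, show Df 3 1 = 1 from rfl] <;>
      omega)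

lemma enc_inj (n i1 j1 a61 a91 i2 j2 a62 a92 : ℕ)
    (h1 : 2*i1 + 5*j1 + 6*a61 + 9*a91 = n) (h61 : a61 ≤ 3) (h91 : a91 ≤ 1)
    (h2 : 2*i2 + 5*j2 + 6*a62 + 9*a92 = n) (h62 : a62 ≤ 3) (h92 : a92 ≤ 1)
    (heq : enc n i1 j1 a61 a91 = enc n i2 j2 a62 a92) :
    i1 = i2 ∧ j1 = j2 ∧ a61 = a62 ∧ a91 = a92 := by
  unfold enc at heq
  rw [Prod.ext_iff] at heq
  split_ifs at heq <;>
    (obtain ⟨e1, e2⟩ := heq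
     interval_cases a61 <;> interval_cases a91 <;> interval_cases a62 <;> interval_cases a92 <;>
       simp only [show Lf 0 0 = 0 from rfl, show Lf 1 0 = 0 from rfl, show Lf 2 0 = 1 from rfl,
        show Lf 3 0 = 2 from rfl, show Lf 0 1 = 1 from rfl, show Lf 1 1 = 2 from rfl,
        show Lf 2 1 = 3 from rfl, show Lf 3 1 = 3 from rfl,
        show Df 0 0 = 0 from rfl, show Df 1 0 = 1 from rfl, show Df 2 0 = 1 from rfl,
        show Df 3 0 = 1 from rfl, show Df 0 1 = 0 from rfl, show Df 1 1 = 0 from rfl,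
        show Df 2 1 = 0 from rfl, show Df 3 1 = 1 from rfl] at e1 e2 <;>
       omega)

lemma alpha_struct (α : Multiset ℕ) (hmod : ∀ p ∈ α, p % 3 = 2) (hC : CondC α) :
    α = Multiset.replicate (α.count 2) 2 + Multiset.replicate (α.count 5) 5 := by
  rcases hC with h0 | h2 | ⟨hsup, _⟩
  · subst h0; simp
  · subst h2; decide
  · apply two_val 2 5 (by norm_num)
    intro p hp
    have h1 := hmod p hp
    have h2 : p ≤ α.sup := Multiset.le_sup hp
    omega

lemma src_facts (n : ℕ) (x : Multiset ℕ × Multiset ℕ × Multiset ℕ)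
    (hx : x ∈ TT (n:ℤ) ∧ x.2.1 = 0 ∧ x.2.2.count 6 ≤ 3 ∧ x.2.2.count 9 ≤ 1 ∧ CondC x.1) :
    x.1 = Multiset.replicate (x.1.count 2) 2 + Multiset.replicate (x.1.count 5) 5 ∧
    x.2.1 = 0 ∧
    x.2.2 = Multiset.replicate (x.2.2.count 6) 6 + Multiset.replicate (x.2.2.count 9) 9 ∧
    2 * x.1.count 2 + 5 * x.1.count 5 + 6 * x.2.2.count 6 + 9 * x.2.2.count 9 = n := by
  obtain ⟨⟨hmod, _, hg, hsum⟩, hb0, h6, h9, hC⟩ := hx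
  have hα := alpha_struct x.1 hmod hC
  have hγ := two_val 6 9 (by norm_num) x.2.2 hg
  refine ⟨hα, hb0, hγ, ?_⟩
  rw [hα, hb0, hγ] at hsum
  simp only [Multiset.sum_add, rep_sum, Multiset.sum_zero] at hsum
  push_cast at hsum
  omega

end CardT7S7Aux

open CardT7S7Aux in
/-- For `n ≥ 152`, the cardinality of `T_7(n)` (triples in `T(n)` with `β = ∅`, at most
three parts of `γ` equal to `6`, at most one part of `γ` equal to `9`, and `α` satisfying
condition (C)) is at most the cardinality of `S_7(n-3)` (triples in `S(n-3)` with every part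
of `π` equal to `2`, every part of `μ` equal to `4` or `7` with at least four parts equal to
`4`, and `δ = ∅`). -/
theorem card_T7_le_card_S7 (n : ℕ) (hn : 152 ≤ n) :
    Nat.card {x | x ∈ TT (n : ℤ) ∧ x.2.1 = 0 ∧ x.2.2.count 6 ≤ 3 ∧ x.2.2.count 9 ≤ 1 ∧
        CondC x.1} ≤
      Nat.card {x | x ∈ SS ((n : ℤ) - 3) ∧ (∀ p ∈ x.1, p = 2) ∧
        (∀ p ∈ x.2.1, p = 4 ∨ p = 7) ∧ 4 ≤ x.2.1.count 4 ∧ x.2.2 = 0} := by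
  classical
  set B : Set (Multiset ℕ × Multiset ℕ × Multiset ℕ) :=
    {x | x ∈ SS ((n : ℤ) - 3) ∧ (∀ p ∈ x.1, p = 2) ∧
      (∀ p ∈ x.2.1, p = 4 ∨ p = 7) ∧ 4 ≤ x.2.1.count 4 ∧ x.2.2 = 0} with hBdef
  -- B is finite
  have hBfin : B.Finite := by
    have hprod : (Set.Iic n ×ˢ (Set.Iic n ×ˢ Set.Iic n) :
        Set (ℕ × ℕ × ℕ)).Finite :=
      (Set.finite_Iic n).prod ((Set.finite_Iic n).prod (Set.finite_Iic n))
    refine Set.Finite.subset (hprod.image (fun p : ℕ × ℕ × ℕ =>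
      ((Multiset.replicate p.1 2 : Multiset ℕ),
       (Multiset.replicate p.2.1 4 + Multiset.replicate p.2.2 7, (0 : Multiset ℕ))))) ?_
    rintro x ⟨⟨hmod, hmu, hdel, hsum⟩, hpi, hmu2, hc4, hd0⟩
    have hπ : x.1 = Multiset.replicate (Multiset.card x.1) 2 :=
      Multiset.eq_replicate_card.mpr hpi
    have hμ : x.2.1 = Multiset.replicate (x.2.1.count 4) 4 +
        Multiset.replicate (x.2.1.count 7) 7 := two_val 4 7 (by norm_num) x.2.1 hmu2
    rw [hπ, hd0, hμ] at hsum
    simp only [Multiset.sum_add, rep_sum, Multiset.sum_zero] at hsum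
    push_cast at hsum
    refine ⟨(Multiset.card x.1, x.2.1.count 4, x.2.1.count 7), ?_, ?_⟩
    · refine ⟨Set.mem_Iic.mpr ?_, Set.mem_Iic.mpr ?_, Set.mem_Iic.mpr ?_⟩ <;> dsimp only <;>
        omega
    · exact Prod.ext (hπ.symm) (Prod.ext (hμ.symm) (hd0.symm))
  haveI : Finite ↥B := hBfin.to_subtype
  -- the injection
  set F : (Multiset ℕ × Multiset ℕ × Multiset ℕ) → (Multiset ℕ × Multiset ℕ × Multiset ℕ) :=
    fun x =>
      (Multiset.replicate
        ((n - 3 - (4 * (enc n (x.1.count 2) (x.1.count 5) (x.2.2.count 6) (x.2.2.count 9)).1 +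
           7 * (enc n (x.1.count 2) (x.1.count 5) (x.2.2.count 6) (x.2.2.count 9)).2)) / 2) 2,
       (Multiset.replicate (enc n (x.1.count 2) (x.1.count 5) (x.2.2.count 6) (x.2.2.count 9)).1 4 +
        Multiset.replicate (enc n (x.1.count 2) (x.1.count 5) (x.2.2.count 6) (x.2.2.count 9)).2 7,
        (0 : Multiset ℕ))) with hFdef
  have hmemF : ∀ x (hx : x ∈ {x | x ∈ TT (n : ℤ) ∧ x.2.1 = 0 ∧ x.2.2.count 6 ≤ 3 ∧
      x.2.2.count 9 ≤ 1 ∧ CondC x.1}), F x ∈ B := by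
    intro x hx
    simp only [hFdef]
    obtain ⟨hα, hb0, hγ, hsum⟩ := src_facts n x hx
    obtain ⟨_, _, h6, h9, _⟩ := hx
    obtain ⟨ha4, hle, hpar⟩ := enc_spec n (x.1.count 2) (x.1.count 5) (x.2.2.count 6)
      (x.2.2.count 9) hsum h6 h9 hn
    set a := (enc n (x.1.count 2) (x.1.count 5) (x.2.2.count 6) (x.2.2.count 9)).1 with hadef
    set b := (enc n (x.1.count 2) (x.1.count 5) (x.2.2.count 6) (x.2.2.count 9)).2 with hbdef
    refine ⟨⟨?_, ?_, ?_, ?_⟩, ?_, ?_, ?_, rfl⟩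
    · intro p hp
      rw [Multiset.eq_of_mem_replicate hp]
    · intro p hp
      rcases Multiset.mem_add.mp hp with h | h <;> rw [Multiset.eq_of_mem_replicate h] <;> omega
    · intro p hp
      simp at hp
    · dsimp only
      simp only [Multiset.sum_add, rep_sum, Multiset.sum_zero]
      push_cast
      omega
    · intro p hp
      rw [Multiset.eq_of_mem_replicate hp]
    · intro p hp
      rcases Multiset.mem_add.mp hp with h | h <;> rw [Multiset.eq_of_mem_replicate h] <;> simp
    · dsimp only
      rw [Multiset.count_add, Multiset.count_replicate, Multiset.count_replicate]
      norm_num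
      omega
  refine Nat.card_le_card_of_injective
    (fun x => (⟨F x.1, hmemF x.1 x.2⟩ : ↥B)) ?_
  rintro ⟨x1, hx1⟩ ⟨x2, hx2⟩ h
  simp only [Subtype.mk.injEq] at h
  obtain ⟨hα1, hb01, hγ1, hsum1⟩ := src_facts n x1 hx1
  obtain ⟨_, _, h61, h91, _⟩ := hx1
  obtain ⟨hα2, hb02, hγ2, hsum2⟩ := src_facts n x2 hx2
  obtain ⟨_, _, h62, h92, _⟩ := hx2
  have hP : (F x1).2.1 = (F x2).2.1 := by rw [h]
  simp only [hFdef] at hP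
  have ha : (enc n (x1.1.count 2) (x1.1.count 5) (x1.2.2.count 6) (x1.2.2.count 9)).1 =
      (enc n (x2.1.count 2) (x2.1.count 5) (x2.2.2.count 6) (x2.2.2.count 9)).1 := by
    have := congrArg (Multiset.count 4) hP
    simpa [Multiset.count_add, Multiset.count_replicate] using this
  have hb : (enc n (x1.1.count 2) (x1.1.count 5) (x1.2.2.count 6) (x1.2.2.count 9)).2 =
      (enc n (x2.1.count 2) (x2.1.count 5) (x2.2.2.count 6) (x2.2.2.count 9)).2 := by
    have := congrArg (Multiset.count 7) hP
    simpa [Multiset.count_add, Multiset.count_replicate] using this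
  obtain ⟨e1, e2, e3, e4⟩ := enc_inj n (x1.1.count 2) (x1.1.count 5) (x1.2.2.count 6)
    (x1.2.2.count 9) (x2.1.count 2) (x2.1.count 5) (x2.2.2.count 6) (x2.2.2.count 9)
    hsum1 h61 h91 hsum2 h62 h92 (Prod.ext ha hb)
  apply Subtype.ext
  refine Prod.ext ?_ (Prod.ext ?_ ?_)
  · rw [hα1, hα2, e1, e2]
  · rw [hb01, hb02]
  · rw [hγ1, hγ2, e3, e4]
end

section
/- For every integer t ≥ 1, the following identity holds in ℚ: ∑_{j=0}^{t−1} C(2t−1−j, j) · ∑_{k=0}^{j} (−1)^k C(j,k)/(2t+k−2j) − ∑_{j=0}^{t} C(2t+1−j, j) · ∑_{k=0}^{j} (−1)^k C(j,k)/(2t+2+k−2j) = −1/((2t+1)(2t+2)), where C(m,r) denotes the binomial coefficient m choose r. -/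
open Finset Nat

/-- Product form of the ascending factorial. -/
lemma ascFactorial_prod (n : ℕ) : ∀ k : ℕ, n.ascFactorial k = ∏ i ∈ range k, (n + i)
  | 0 => by simp
  | k + 1 => by rw [Nat.ascFactorial_succ, prod_range_succ, ascFactorial_prod n k, mul_comm]

/-- The key partial-fraction identity:
`∑_{k=0}^{j} (−1)^k C(j,k)/(x+k) = j! / ∏_{i=0}^{j} (x+i)` for `x > 0`. -/
lemma inner_sum_eq (j : ℕ) : ∀ x : ℚ, 0 < x →
    ∑ k ∈ range (j + 1), (-1 : ℚ) ^ k * (j.choose k : ℚ) / (x + k)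
      = (j ! : ℚ) / ∏ i ∈ range (j + 1), (x + i) := by
  induction j with
  | zero => intro x hx; simp
  | succ j ih =>
    intro x hx
    have hx1 : (0 : ℚ) < x + 1 := by linarith
    have hstep : ∑ k ∈ range (j + 2), (-1 : ℚ) ^ k * ((j+1).choose k : ℚ) / (x + k)
        = (∑ k ∈ range (j + 1), (-1 : ℚ) ^ k * (j.choose k : ℚ) / (x + k))
          - ∑ k ∈ range (j + 1), (-1 : ℚ) ^ k * (j.choose k : ℚ) / ((x + 1) + k) := by
      rw [Finset.sum_range_succ' (fun k => (-1 : ℚ) ^ k * ((j+1).choose k : ℚ) / (x + k))]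
      have hsplit : ∀ k ∈ range (j + 1),
          (-1 : ℚ) ^ (k + 1) * ((j+1).choose (k+1) : ℚ) / (x + (k + 1 : ℕ))
            = (-1 : ℚ) ^ (k + 1) * (j.choose (k+1) : ℚ) / (x + (k+1 : ℕ))
              - (-1 : ℚ) ^ k * (j.choose k : ℚ) / ((x + 1) + k) := by
        intro k hk
        rw [Nat.choose_succ_succ]
        push_cast
        have : x + ((k : ℚ) + 1) ≠ 0 := by
          have : (0:ℚ) ≤ (k:ℚ) := Nat.cast_nonneg k
          intro h; nlinarith
        have h2 : (x + 1) + (k : ℚ) ≠ 0 := by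
          have : (0:ℚ) ≤ (k:ℚ) := Nat.cast_nonneg k
          intro h; nlinarith
        field_simp
        ring
      rw [Finset.sum_congr rfl hsplit, Finset.sum_sub_distrib]
      have hlast : ∑ k ∈ range (j + 1), (-1 : ℚ) ^ (k + 1) * (j.choose (k+1) : ℚ) / (x + ((k : ℕ)+1 : ℕ))
          = (∑ k ∈ range (j + 1), (-1 : ℚ) ^ k * (j.choose k : ℚ) / (x + k))
            - (-1 : ℚ) ^ 0 * (j.choose 0 : ℚ) / (x + ((0 : ℕ) : ℚ)) := by
        rw [eq_sub_iff_add_eq,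
          ← Finset.sum_range_succ' (fun k => (-1 : ℚ) ^ k * (j.choose k : ℚ) / (x + k)) (j + 1),
          Finset.sum_range_succ]
        simp [Nat.choose_succ_self]
      rw [hlast]
      simp
      ring
    rw [hstep, ih x hx, ih (x + 1) hx1]
    have hApos : (0 : ℚ) < ∏ i ∈ range (j + 1), (x + i) :=
      Finset.prod_pos (fun i _ => by positivity)
    have hBpos : (0 : ℚ) < ∏ i ∈ range (j + 1), ((x + 1) + i) :=
      Finset.prod_pos (fun i _ => by positivity)
    have hA : (∏ i ∈ range (j + 1), (x + i)) ≠ 0 := ne_of_gt hApos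
    have hB : (∏ i ∈ range (j + 1), ((x + 1) + i)) ≠ 0 := ne_of_gt hBpos
    have hP1 : ∏ i ∈ range (j + 2), (x + i)
        = (∏ i ∈ range (j + 1), (x + i)) * (x + (j + 1 : ℕ)) := prod_range_succ _ _
    have hP2 : ∏ i ∈ range (j + 2), (x + i)
        = (∏ i ∈ range (j + 1), ((x + 1) + i)) * x := by
      rw [Finset.prod_range_succ' (fun i => x + i)]
      congr 1
      · exact Finset.prod_congr rfl (fun i _ => by push_cast; ring)
      · simp
    rw [hP1]
    have hrel : (∏ i ∈ range (j + 1), (x + i)) * (x + (j + 1 : ℕ))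
        = (∏ i ∈ range (j + 1), ((x + 1) + i)) * x := by rw [← hP1, hP2]
    have hxne : x ≠ 0 := ne_of_gt hx
    rw [Nat.factorial_succ]
    push_cast
    push_cast at hrel
    have hden : (∏ i ∈ range (j + 1), (x + i)) * (x + ((j : ℚ) + 1)) ≠ 0 :=
      mul_ne_zero hA (by positivity)
    rw [div_sub_div _ _ hA hB, div_eq_div_iff (mul_ne_zero hA hB) hden]
    linear_combination (-(j ! : ℚ) * (∏ i ∈ range (j + 1), (x + (i : ℚ)))) * hrel

/-- Termwise closed form: for `j ≤ m`,
`C(m,j) · ∑_{k=0}^{j} (−1)^k C(j,k)/((m−j+1)+k) = 1/(m+1)`. -/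
lemma term_eq (m j : ℕ) (hj : j ≤ m) :
    (m.choose j : ℚ) * ∑ k ∈ range (j + 1),
        (-1 : ℚ) ^ k * (j.choose k : ℚ) / (((m - j : ℕ) : ℚ) + 1 + k)
      = 1 / ((m : ℚ) + 1) := by
  have hx : (0 : ℚ) < ((m - j : ℕ) : ℚ) + 1 := by positivity
  have h := inner_sum_eq j (((m - j : ℕ) : ℚ) + 1) hx
  have hconv : ∀ k ∈ range (j+1), (-1 : ℚ) ^ k * (j.choose k : ℚ) / (((m - j : ℕ) : ℚ) + 1 + k)
      = (-1 : ℚ) ^ k * (j.choose k : ℚ) / ((((m - j : ℕ) : ℚ) + 1) + k) := by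
    intro k _; ring_nf
  rw [Finset.sum_congr rfl hconv, h]
  -- product equals (m+1)! / (m-j)!
  have hprod : ((m - j)! : ℚ) * ∏ i ∈ range (j + 1), ((((m - j : ℕ) : ℚ) + 1) + i)
      = ((m + 1)! : ℚ) := by
    have hnat : (m - j)! * (m - j + 1).ascFactorial (j + 1) = (m + 1)! := by
      have := Nat.factorial_mul_ascFactorial (m - j) (j + 1)
      rwa [show m - j + (j + 1) = m + 1 by omega] at this
    have hp : (m - j + 1).ascFactorial (j + 1) = ∏ i ∈ range (j + 1), (m - j + 1 + i) :=
      ascFactorial_prod _ _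
    calc ((m - j)! : ℚ) * ∏ i ∈ range (j + 1), ((((m - j : ℕ) : ℚ) + 1) + i)
        = ((m - j)! : ℚ) * ((∏ i ∈ range (j + 1), (m - j + 1 + i) : ℕ) : ℚ) := by
          push_cast; ring
      _ = (((m - j)! * (m - j + 1).ascFactorial (j + 1) : ℕ) : ℚ) := by rw [hp]; push_cast; ring
      _ = ((m + 1)! : ℚ) := by rw [hnat]
  have hchoose : (m.choose j : ℚ) * (j ! : ℚ) * ((m - j)! : ℚ) = (m ! : ℚ) := by
    have := Nat.choose_mul_factorial_mul_factorial hj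
    exact_mod_cast congrArg (Nat.cast : ℕ → ℚ) this
  have hPne : (∏ i ∈ range (j + 1), ((((m - j : ℕ) : ℚ) + 1) + i)) ≠ 0 :=
    ne_of_gt (Finset.prod_pos (fun i _ => by positivity))
  have hfac : ((m + 1)! : ℚ) = ((m : ℚ) + 1) * (m ! : ℚ) := by
    rw [Nat.factorial_succ]; push_cast; ring
  have hm1 : ((m : ℚ) + 1) ≠ 0 := by positivity
  have hmfac : (m ! : ℚ) ≠ 0 := by positivity
  have hfj : ((m - j)! : ℚ) ≠ 0 := by positivity
  have hPval : (∏ i ∈ range (j + 1), ((((m - j : ℕ) : ℚ)) + 1 + i))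
      = ((m + 1)! : ℚ) / ((m - j)! : ℚ) := by
    rw [eq_div_iff hfj]; linear_combination hprod
  rw [← mul_div_assoc, div_eq_div_iff hPne hm1, one_mul, hPval, eq_div_iff hfj, hfac]
  linear_combination ((m : ℚ) + 1) * hchoose

/-- For every integer `t ≥ 1`,
`∑_{j=0}^{t−1} C(2t−1−j, j) ∑_{k=0}^{j} (−1)^k C(j,k)/(2t+k−2j)
 − ∑_{j=0}^{t} C(2t+1−j, j) ∑_{k=0}^{j} (−1)^k C(j,k)/(2t+2+k−2j) = −1/((2t+1)(2t+2))`
in `ℚ`. -/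
theorem binomial_sum_identity (t : ℕ) (ht : 1 ≤ t) :
    (∑ j ∈ Finset.range t, ((2 * t - 1 - j).choose j : ℚ) *
        ∑ k ∈ Finset.range (j + 1),
          (-1 : ℚ) ^ k * (j.choose k : ℚ) / (2 * (t : ℚ) + (k : ℚ) - 2 * (j : ℚ)))
      - (∑ j ∈ Finset.range (t + 1), ((2 * t + 1 - j).choose j : ℚ) *
        ∑ k ∈ Finset.range (j + 1),
          (-1 : ℚ) ^ k * (j.choose k : ℚ) / (2 * (t : ℚ) + 2 + (k : ℚ) - 2 * (j : ℚ)))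
      = -(1 / ((2 * (t : ℚ) + 1) * (2 * (t : ℚ) + 2))) := by
  have h1 : ∀ j ∈ range t, ((2 * t - 1 - j).choose j : ℚ) *
        ∑ k ∈ range (j + 1),
          (-1 : ℚ) ^ k * (j.choose k : ℚ) / (2 * (t : ℚ) + (k : ℚ) - 2 * (j : ℚ))
      = 1 / (2 * (t : ℚ) - j) := by
    intro j hj
    rw [Finset.mem_range] at hj
    set m := 2 * t - 1 - j with hm
    have hjm : j ≤ m := by omega
    have hconv : ∀ k ∈ range (j + 1),
        (-1 : ℚ) ^ k * (j.choose k : ℚ) / (2 * (t : ℚ) + (k : ℚ) - 2 * (j : ℚ))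
          = (-1 : ℚ) ^ k * (j.choose k : ℚ) / (((m - j : ℕ) : ℚ) + 1 + k) := by
      intro k _
      have : ((m - j : ℕ) : ℚ) = 2 * (t : ℚ) - 1 - 2 * j := by
        have : m - j = 2 * t - 1 - 2 * j := by omega
        rw [this]
        have h' : (2 * t - 1 - 2 * j : ℕ) + (1 + 2 * j) = 2 * t := by omega
        have := congrArg (Nat.cast : ℕ → ℚ) h'
        push_cast at this
        linarith
      rw [this]; ring_nf
    rw [Finset.sum_congr rfl hconv, term_eq m j hjm]
    have : ((m : ℕ) : ℚ) + 1 = 2 * (t : ℚ) - j := by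
      have h' : (m : ℕ) + 1 + j = 2 * t := by omega
      have := congrArg (Nat.cast : ℕ → ℚ) h'
      push_cast at this
      linarith
    rw [this]
  have h2 : ∀ j ∈ range (t + 1), ((2 * t + 1 - j).choose j : ℚ) *
        ∑ k ∈ range (j + 1),
          (-1 : ℚ) ^ k * (j.choose k : ℚ) / (2 * (t : ℚ) + 2 + (k : ℚ) - 2 * (j : ℚ))
      = 1 / (2 * (t : ℚ) + 2 - j) := by
    intro j hj
    rw [Finset.mem_range] at hj
    set m := 2 * t + 1 - j with hm
    have hjm : j ≤ m := by omega
    have hconv : ∀ k ∈ range (j + 1),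
        (-1 : ℚ) ^ k * (j.choose k : ℚ) / (2 * (t : ℚ) + 2 + (k : ℚ) - 2 * (j : ℚ))
          = (-1 : ℚ) ^ k * (j.choose k : ℚ) / (((m - j : ℕ) : ℚ) + 1 + k) := by
      intro k _
      have : ((m - j : ℕ) : ℚ) = 2 * (t : ℚ) + 1 - 2 * j := by
        have h' : (m - j : ℕ) + 2 * j = 2 * t + 1 := by omega
        have := congrArg (Nat.cast : ℕ → ℚ) h'
        push_cast at this
        linarith
      rw [this]; ring_nf
    rw [Finset.sum_congr rfl hconv, term_eq m j hjm]
    have : ((m : ℕ) : ℚ) + 1 = 2 * (t : ℚ) + 2 - j := by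
      have h' : (m : ℕ) + 1 + j = 2 * t + 2 := by omega
      have := congrArg (Nat.cast : ℕ → ℚ) h'
      push_cast at this
      linarith
    rw [this]
  rw [Finset.sum_congr rfl h1, Finset.sum_congr rfl h2]
  obtain ⟨s, rfl⟩ : ∃ s, t = s + 1 := ⟨t - 1, by omega⟩
  rw [Finset.sum_range_succ (fun j => 1 / (2 * ((s + 1 : ℕ) : ℚ) - j)) s]
  rw [Finset.sum_range_succ' (fun j => 1 / (2 * ((s + 1 : ℕ) : ℚ) + 2 - j)) (s + 1)]
  rw [Finset.sum_range_succ' (fun j => 1 / (2 * ((s + 1 : ℕ) : ℚ) + 2 - (j + 1 : ℕ))) s]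
  have hre : ∀ j ∈ range s, 1 / (2 * ((s + 1 : ℕ) : ℚ) + 2 - ((j + 1 : ℕ) + 1 : ℕ))
      = 1 / (2 * ((s + 1 : ℕ) : ℚ) - j) := by
    intro j _; push_cast; ring_nf
  rw [Finset.sum_congr rfl hre]
  have hs : (0 : ℚ) ≤ (s : ℚ) := Nat.cast_nonneg s
  push_cast
  have d1 : (2 : ℚ) * ((s : ℚ) + 1) - s ≠ 0 := by nlinarith
  have d2 : (2 : ℚ) * ((s : ℚ) + 1) + 2 - (0 + 1 : ℕ) ≠ 0 := by push_cast; nlinarith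
  have d3 : (2 : ℚ) * ((s : ℚ) + 1) + 2 - (0 : ℕ) ≠ 0 := by push_cast; nlinarith
  push_cast at d2 d3 ⊢
  have d5 : (2 : ℚ) * ((s : ℚ) + 1) + 2 - 1 = 2 * (s : ℚ) + 3 := by ring
  rw [d5]
  have d6 : (2 : ℚ) * (s : ℚ) + 3 ≠ 0 := by positivity
  field_simp
  ring
end

section
/- Let Q(n) denote the number of partitions of n into distinct parts and let S(n) = ∑_{i=0}^{n} Q(i). Then for every fixed nonnegative integer k, the ratio S(n+k)/S(n) tends to 1 as n → ∞. -/
/-- `Q n`: the number of partitions of `n` into distinct parts. -/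
def QDistinct (n : ℕ) : ℕ := (Nat.Partition.distincts n).card

/-- `S n = ∑_{i=0}^{n} Q(i)`. -/
def Ssum (n : ℕ) : ℕ := ∑ i ∈ Finset.range (n + 1), QDistinct i

section EulerInlined
-- Euler's partition theorem is now part of Mathlib (`Nat.Partition.card_odds_eq_card_distincts`).

open Finset

namespace Theorems100

theorem partition_theorem (n : ℕ) : #(Nat.Partition.odds n) = #(Nat.Partition.distincts n) :=
  Nat.Partition.card_odds_eq_card_distincts n

end Theorems100

end EulerInlined


namespace SsumAux
open Finset Filter

/-- number of odd partitions -/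
def QO (n : ℕ) : ℕ := (Nat.Partition.odds n).card

lemma QO_eq (n : ℕ) : QO n = QDistinct n := Theorems100.partition_theorem n

lemma sup_mem (s : Multiset ℕ) (hs : s ≠ 0) : s.sup ∈ s := by
  induction s using Multiset.induction_on with
  | empty => simp at hs
  | cons a t ih =>
    rw [Multiset.sup_cons]
    rcases eq_or_ne t 0 with rfl | ht
    · simp
    · rcases le_total a t.sup with h | h
      · rw [sup_eq_right.mpr h]; exact Multiset.mem_cons_of_mem (ih ht)
      · rw [sup_eq_left.mpr h]; exact Multiset.mem_cons_self a t

lemma card_le_sum (s : Multiset ℕ) (h : ∀ x ∈ s, 0 < x) : Multiset.card s ≤ s.sum := by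
  induction s using Multiset.induction_on with
  | empty => simp
  | cons a t ih =>
    rw [Multiset.card_cons, Multiset.sum_cons]
    have ha : 0 < a := h a (Multiset.mem_cons_self a t)
    have := ih (fun x hx => h x (Multiset.mem_cons_of_mem hx))
    omega

lemma mem_odds {n : ℕ} {p : Nat.Partition n} :
    p ∈ Nat.Partition.odds n ↔ ∀ i ∈ p.parts, ¬Even i := by
  simp [Nat.Partition.odds, Nat.Partition.restricted]

/-- The map subtracting `2*j` from the largest part. -/
def stepMap (N j : ℕ) (p : Nat.Partition N) : Nat.Partition (N - 2 * j) :=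
  if h : 2 * j + 1 ≤ p.parts.sup then
    { parts := (p.parts.sup - 2 * j) ::ₘ p.parts.erase p.parts.sup
      parts_pos := by
        intro i hi
        rcases Multiset.mem_cons.1 hi with rfl | hi
        · omega
        · exact p.parts_pos (Multiset.mem_of_mem_erase hi)
      parts_sum := by
        have hne : p.parts ≠ 0 := by
          intro h0; rw [h0] at h; simp at h
        have hmem : p.parts.sup ∈ p.parts := sup_mem _ hne
        have hsum : p.parts.sup + (p.parts.erase p.parts.sup).sum = N := by
          rw [← Multiset.sum_cons, Multiset.cons_erase hmem, p.parts_sum]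
        rw [Multiset.sum_cons]
        omega }
  else
    { parts := Multiset.replicate (N - 2 * j) 1
      parts_pos := by intro i hi; rw [Multiset.eq_of_mem_replicate hi]; norm_num
      parts_sum := by simp }

lemma stepMap_parts {N j : ℕ} {p : Nat.Partition N} (h : 2 * j + 1 ≤ p.parts.sup) :
    (stepMap N j p).parts = (p.parts.sup - 2 * j) ::ₘ p.parts.erase p.parts.sup := by
  rw [stepMap, dif_pos h]

lemma step (N j : ℕ) (hj : 0 < j) :
    QO N ≤ (2 * j + 1) * QO (N - 2 * j) + (N + 1) ^ j := by
  classical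
  set s : Finset (Nat.Partition N) := Nat.Partition.odds N with hs
  set s₁ := s.filter (fun p => 2 * j + 1 ≤ p.parts.sup) with hs₁
  set s₂ := s.filter (fun p => ¬(2 * j + 1 ≤ p.parts.sup)) with hs₂
  have hsplit : s₁.card + s₂.card = s.card :=
    Finset.card_filter_add_card_filter_not _
  have h1 : s₁.card ≤ (2 * j + 1) * QO (N - 2 * j) := by
    have himg : s₁.image (stepMap N j) ⊆ Nat.Partition.odds (N - 2 * j) := by
      intro q hq
      obtain ⟨p, hp, rfl⟩ := Finset.mem_image.1 hq
      obtain ⟨hpodds, hpsup⟩ := Finset.mem_filter.1 hp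
      rw [mem_odds]
      intro i hi
      rw [stepMap_parts hpsup] at hi
      have hodd := (mem_odds.1 hpodds)
      have hne : p.parts ≠ 0 := by
        intro h0; rw [h0] at hpsup; simp at hpsup
      rcases Multiset.mem_cons.1 hi with rfl | hi
      · have := hodd _ (sup_mem _ hne)
        rw [Nat.not_even_iff] at this ⊢
        omega
      · exact hodd _ (Multiset.mem_of_mem_erase hi)
    have hfib : ∀ q ∈ s₁.image (stepMap N j),
        (s₁.filter (fun p => stepMap N j p = q)).card ≤ 2 * j + 1 := by
      intro q hq
      have : (s₁.filter (fun p => stepMap N j p = q)).card ≤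
          (Finset.Icc q.parts.sup (q.parts.sup + 2 * j)).card := by
        apply Finset.card_le_card_of_injOn (fun p => p.parts.sup)
        · intro p hp
          obtain ⟨hp1, hp2⟩ := Finset.mem_filter.1 hp
          obtain ⟨_, hpsup⟩ := Finset.mem_filter.1 hp1
          rw [Finset.mem_coe, Finset.mem_Icc]; dsimp only
          have hq : q.parts = (p.parts.sup - 2 * j) ::ₘ p.parts.erase p.parts.sup := by
            rw [← hp2, stepMap_parts hpsup]
          constructor
          · rw [hq]
            apply Multiset.sup_le.2
            intro b hb
            rcases Multiset.mem_cons.1 hb with rfl | hb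
            · omega
            · exact Multiset.le_sup (Multiset.mem_of_mem_erase hb)
          · have : p.parts.sup - 2 * j ∈ q.parts := by
              rw [hq]; exact Multiset.mem_cons_self _ _
            have := Multiset.le_sup this
            omega
        · intro p hp p' hp' hsup
          obtain ⟨hp1, hp2⟩ := Finset.mem_filter.1 hp
          obtain ⟨_, hpsup⟩ := Finset.mem_filter.1 hp1
          obtain ⟨hp1', hp2'⟩ := Finset.mem_filter.1 hp'
          obtain ⟨_, hpsup'⟩ := Finset.mem_filter.1 hp1'
          have hne : p.parts ≠ 0 := by intro h0; rw [h0] at hpsup; simp at hpsup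
          have hne' : p'.parts ≠ 0 := by intro h0; rw [h0] at hpsup'; simp at hpsup'
          have hq : q.parts = (p.parts.sup - 2 * j) ::ₘ p.parts.erase p.parts.sup := by
            rw [← hp2, stepMap_parts hpsup]
          have hq' : q.parts = (p'.parts.sup - 2 * j) ::ₘ p'.parts.erase p'.parts.sup := by
            rw [← hp2', stepMap_parts hpsup']
          apply Nat.Partition.ext
          have e1 : p.parts.erase p.parts.sup = q.parts.erase (p.parts.sup - 2 * j) := by
            rw [hq, Multiset.erase_cons_head]
          have e1' : p'.parts.erase p'.parts.sup = q.parts.erase (p'.parts.sup - 2 * j) := by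
            rw [hq', Multiset.erase_cons_head]
          have hsup2 : p.parts.sup = p'.parts.sup := hsup
          calc p.parts = p.parts.sup ::ₘ p.parts.erase p.parts.sup :=
                (Multiset.cons_erase (sup_mem _ hne)).symm
            _ = p'.parts.sup ::ₘ p'.parts.erase p'.parts.sup := by
                rw [e1, e1', hsup2]
            _ = p'.parts := Multiset.cons_erase (sup_mem _ hne')
      calc (s₁.filter (fun p => stepMap N j p = q)).card
          ≤ (Finset.Icc q.parts.sup (q.parts.sup + 2 * j)).card := this
        _ ≤ 2 * j + 1 := by rw [Nat.card_Icc]; omega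
    calc s₁.card ≤ (2 * j + 1) * (s₁.image (stepMap N j)).card :=
          Finset.card_le_mul_card_image s₁ _ hfib
      _ ≤ (2 * j + 1) * QO (N - 2 * j) := by
          exact Nat.mul_le_mul_left _ (Finset.card_le_card himg)
  have h2 : s₂.card ≤ (N + 1) ^ j := by
    have key : ∀ q ∈ s₂, ∀ v ∈ q.parts, v % 2 = 1 ∧ v ≤ 2 * j := by
      intro q hq v hv
      obtain ⟨hq1, hq2⟩ := Finset.mem_filter.1 hq
      constructor
      · have := mem_odds.1 hq1 v hv
        rw [Nat.not_even_iff] at this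
        omega
      · have := Multiset.le_sup hv
        omega
    have : s₂.card ≤ (Finset.univ : Finset (Fin j → Fin (N + 1))).card := by
      apply Finset.card_le_card_of_injOn
        (fun p (i : Fin j) => (⟨p.parts.count (2 * (i : ℕ) + 1), by
          have hc := Multiset.count_le_card (2 * (i : ℕ) + 1) p.parts
          have hcs := card_le_sum p.parts (fun x hx => p.parts_pos hx)
          have := p.parts_sum
          omega⟩ : Fin (N + 1)))
      · intro p _; exact Finset.mem_univ _
      · intro p hp p' hp' heq
        apply Nat.Partition.ext
        ext v
        by_cases hv : v % 2 = 1 ∧ v ≤ 2 * j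
        · have hvlt : v / 2 < j := by omega
          have := congrFun heq ⟨v / 2, hvlt⟩
          simp only [Fin.mk.injEq] at this
          have he : 2 * (v / 2) + 1 = v := by omega
          rw [he] at this
          exact this
        · rw [Multiset.count_eq_zero.2 (fun hmem => hv (key p hp v hmem)),
            Multiset.count_eq_zero.2 (fun hmem => hv (key p' hp' v hmem))]
    simpa [Fintype.card_fun] using this
  have hQN : QO N = s.card := rfl
  linarith


lemma multiset_sum_sum {α : Type*} (s : Finset α) (f : α → Multiset ℕ) :
    (∑ i ∈ s, f i).sum = ∑ i ∈ s, (f i).sum := by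
  classical
  induction s using Finset.induction_on with
  | empty => simp
  | insert _ _ h ih => rw [Finset.sum_insert h, Finset.sum_insert h, Multiset.sum_add, ih]

lemma lowT_le' (J B N : ℕ) (hBN : B * ((J + 1) * (2 * J + 5)) ≤ N)
    (c : Fin (J + 1) → Fin B) :
    ∑ i : Fin (J + 1), (c i : ℕ) * (2 * (i : ℕ) + 3) ≤ N := by
  calc ∑ i : Fin (J + 1), (c i : ℕ) * (2 * (i : ℕ) + 3)
      ≤ ∑ _i : Fin (J + 1), (B - 1) * (2 * J + 5) := by
        apply Finset.sum_le_sum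
        intro i _
        apply Nat.mul_le_mul
        · have := (c i).isLt; omega
        · have := i.isLt; omega
    _ = (J + 1) * ((B - 1) * (2 * J + 5)) := by
        rw [Finset.sum_const, Finset.card_univ, Fintype.card_fin, smul_eq_mul]
    _ ≤ (J + 1) * (B * (2 * J + 5)) := by gcongr <;> omega
    _ = B * ((J + 1) * (2 * J + 5)) := by ring
    _ ≤ N := hBN

lemma lowT_le (N J : ℕ) (c : Fin (J + 1) → Fin (N / ((J + 1) * (2 * J + 5)))) :
    ∑ i : Fin (J + 1), (c i : ℕ) * (2 * (i : ℕ) + 3) ≤ N :=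
  lowT_le' J _ N (Nat.div_mul_le_self N _) c

/-- partition built from multiplicities of parts `3,5,...,2J+3`, padded with `1`s. -/
def lowMap (N J : ℕ) (c : Fin (J + 1) → Fin (N / ((J + 1) * (2 * J + 5)))) :
    Nat.Partition N :=
  { parts := Multiset.replicate (N - ∑ i : Fin (J + 1), (c i : ℕ) * (2 * (i : ℕ) + 3)) 1 +
      ∑ i : Fin (J + 1), Multiset.replicate ((c i : ℕ)) (2 * (i : ℕ) + 3)
    parts_pos := by
      intro x hx
      rcases Multiset.mem_add.1 hx with hx | hx
      · rw [Multiset.eq_of_mem_replicate hx]; norm_num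
      · rw [Multiset.mem_sum] at hx
        obtain ⟨i, _, hx⟩ := hx
        rw [Multiset.eq_of_mem_replicate hx]; omega
    parts_sum := by
      have hT := lowT_le N J c
      rw [Multiset.sum_add, Multiset.sum_replicate, smul_eq_mul, mul_one,
        multiset_sum_sum]
      have hsum : ∀ i : Fin (J + 1),
          (Multiset.replicate ((c i : ℕ)) (2 * (i : ℕ) + 3)).sum
          = (c i : ℕ) * (2 * (i : ℕ) + 3) := by
        intro i; rw [Multiset.sum_replicate, smul_eq_mul]
      rw [Finset.sum_congr rfl (fun i _ => hsum i)]
      omega }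

lemma lowMap_count {N J : ℕ} (c : Fin (J + 1) → Fin (N / ((J + 1) * (2 * J + 5))))
    (i0 : Fin (J + 1)) : (lowMap N J c).parts.count (2 * (i0 : ℕ) + 3) = c i0 := by
  classical
  rw [lowMap]
  rw [Multiset.count_add, Multiset.count_replicate, if_neg (by omega), zero_add,
    Multiset.count_sum']
  rw [Finset.sum_eq_single i0]
  · rw [Multiset.count_replicate, if_pos rfl]
  · intro i _ hne
    rw [Multiset.count_replicate, if_neg]
    intro h
    apply hne
    apply Fin.ext
    omega
  · intro h; exact absurd (Finset.mem_univ _) h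

lemma lowMap_mem_odds {N J : ℕ} (c : Fin (J + 1) → Fin (N / ((J + 1) * (2 * J + 5)))) :
    lowMap N J c ∈ Nat.Partition.odds N := by
  simp only [Nat.Partition.odds, Nat.Partition.restricted, Finset.mem_filter, Finset.mem_univ, true_and]
  intro x hx
  rw [lowMap] at hx
  rcases Multiset.mem_add.1 hx with hx | hx
  · rw [Multiset.eq_of_mem_replicate hx]; simp
  · rw [Multiset.mem_sum] at hx
    obtain ⟨i, _, hx⟩ := hx
    rw [Multiset.eq_of_mem_replicate hx, Nat.even_iff]
    omega

lemma lower (J : ℕ) : ∃ N₀ : ℕ, ∀ N, N₀ ≤ N → 2 * (N + 1) ^ J ≤ (Nat.Partition.odds N).card := by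
  classical
  obtain ⟨D, hD⟩ : ∃ D, D = (J + 1) * (2 * J + 5) := ⟨_, rfl⟩
  refine ⟨2 ^ (J + 1) * (2 * D) ^ (J + 1), fun N hN => ?_⟩
  obtain ⟨B, hB⟩ : ∃ B, B = N / D := ⟨_, rfl⟩
  have hcard : B ^ (J + 1) ≤ (Nat.Partition.odds N).card := by
    subst hD hB
    have hinj : Set.InjOn (lowMap N J)
        (Finset.univ : Finset (Fin (J + 1) → Fin (N / ((J + 1) * (2 * J + 5))))) := by
      intro c _ c' _ h
      funext i
      apply Fin.ext
      rw [← lowMap_count c i, ← lowMap_count c' i, h]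
    have := Finset.card_le_card_of_injOn (lowMap N J)
      (fun c _ => lowMap_mem_odds c) hinj
    simpa [Fintype.card_fun] using this
  have hDpos : 0 < D := by rw [hD]; positivity
  have h2D : 2 * D ≤ 2 ^ (J + 1) * (2 * D) ^ (J + 1) := by
    calc 2 * D = 1 * (2 * D) := (one_mul _).symm
      _ ≤ 2 ^ (J + 1) * (2 * D) ^ (J + 1) :=
        Nat.mul_le_mul (Nat.one_le_two_pow) (Nat.le_self_pow (Nat.succ_ne_zero J) _)
  have hNB : N ≤ 2 * D * B := by
    have h1 : D * (N / D) + N % D = N := Nat.div_add_mod N D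
    rw [← hB] at h1
    have h2 : N % D < D := Nat.mod_lt _ hDpos
    have : 2 * D ≤ N := le_trans h2D hN
    have hB2 : 2 ≤ B := by rw [hB]; exact (Nat.le_div_iff_mul_le hDpos).2 (by linarith)
    have hDB : D * 2 ≤ D * B := Nat.mul_le_mul_left _ hB2
    calc N ≤ D * B + D * B := by linarith
      _ = 2 * D * B := by ring
  have hN1 : 1 ≤ N := by
    have := le_trans h2D hN; omega
  have step1 : N ^ (J + 1) ≤ (2 * D) ^ (J + 1) * B ^ (J + 1) := by
    calc N ^ (J + 1) ≤ (2 * D * B) ^ (J + 1) := Nat.pow_le_pow_left hNB _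
      _ = (2 * D) ^ (J + 1) * B ^ (J + 1) := mul_pow _ _ _
  have step2 : (2 * D) ^ (J + 1) * (2 * (N + 1) ^ J) ≤ N ^ (J + 1) := by
    have ha : (N + 1) ^ J ≤ 2 ^ J * N ^ J := by
      calc (N + 1) ^ J ≤ (2 * N) ^ J := Nat.pow_le_pow_left (by omega) _
        _ = 2 ^ J * N ^ J := mul_pow _ _ _
    calc (2 * D) ^ (J + 1) * (2 * (N + 1) ^ J)
        ≤ (2 * D) ^ (J + 1) * (2 * (2 ^ J * N ^ J)) := by
          apply Nat.mul_le_mul_left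
          exact Nat.mul_le_mul_left _ ha
      _ = (2 ^ (J + 1) * (2 * D) ^ (J + 1)) * N ^ J := by ring
      _ ≤ N * N ^ J := Nat.mul_le_mul_right _ hN
      _ = N ^ (J + 1) := by ring
  have : (2 * D) ^ (J + 1) * (2 * (N + 1) ^ J) ≤ (2 * D) ^ (J + 1) * B ^ (J + 1) :=
    le_trans step2 step1
  have hfin : 2 * (N + 1) ^ J ≤ B ^ (J + 1) :=
    Nat.le_of_mul_le_mul_left this (pow_pos (by omega : 0 < 2 * D) _)
  exact le_trans hfin hcard


lemma QD0_pos : 0 < QDistinct 0 := by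
  rw [QDistinct]
  apply Finset.card_pos.2
  refine ⟨⟨0, fun {i} hi => absurd hi (by simp), rfl⟩,
    Finset.mem_filter.2 ⟨Finset.mem_univ _, ?_⟩⟩
  simp

lemma Ssum_pos (n : ℕ) : 0 < Ssum n :=
  lt_of_lt_of_le QD0_pos (Finset.single_le_sum (fun i _ => Nat.zero_le (QDistinct i))
    (Finset.mem_range.2 (Nat.succ_pos n)))

lemma harm : Tendsto (fun J => ∑ j ∈ Finset.range J, (1:ℝ)/(2*(j:ℝ)+3)) atTop atTop := by
  have h0 := Real.tendsto_sum_range_one_div_nat_succ_atTop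
  have h1 : Tendsto (fun J => (1/3 : ℝ) * ∑ j ∈ Finset.range J, (1:ℝ)/((j:ℝ)+1))
      atTop atTop := h0.const_mul_atTop (by norm_num)
  apply tendsto_atTop_mono ?_ h1
  intro J
  rw [Finset.mul_sum]
  apply Finset.sum_le_sum
  intro j _
  rw [div_mul_div_comm, one_mul]
  apply one_div_le_one_div_of_le
  · positivity
  · have : (0:ℝ) ≤ (j:ℝ) := Nat.cast_nonneg j
    linarith

lemma main (m : ℕ) : ∀ᶠ n in atTop, (m : ℝ) * (QDistinct (n+1) : ℝ) ≤ (Ssum n : ℝ) := by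
  obtain ⟨J, hJ⟩ := (harm.eventually_ge_atTop (2*(m:ℝ))).exists
  obtain ⟨N₀, hN₀⟩ := lower J
  filter_upwards [eventually_ge_atTop (N₀ + 2*J + 2)] with n hn
  have hstepR : ∀ j ∈ Finset.range J,
      ((QO (n+1) : ℝ) - ((n+2:ℕ):ℝ)^J) * ((1:ℝ)/(2*(j:ℝ)+3)) ≤ (QO (n-1-2*j) : ℝ) := by
    intro j hj
    have hjJ : j < J := Finset.mem_range.1 hj
    have h := step (n+1) (j+1) (Nat.succ_pos j)
    rw [(by omega : n + 1 - 2*(j+1) = n - 1 - 2*j)] at h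
    rw [(by ring : 2*(j+1)+1 = 2*j+3)] at h
    have hpow : (n+1+1)^(j+1) ≤ (n+2)^J := Nat.pow_le_pow_right (by omega) (by omega)
    have h2 : QO (n+1) ≤ (2*j+3) * QO (n-1-2*j) + (n+2)^J := by
      have he : (n+1+1)^(j+1) = (n+1+1)^(j+1) := rfl
      linarith [hpow]
    have h3 : ((QO (n+1):ℝ)) ≤ (2*(j:ℝ)+3) * (QO (n-1-2*j):ℝ) + ((n+2:ℕ):ℝ)^J := by
      exact_mod_cast h2
    have hpos : (0:ℝ) < 2*(j:ℝ)+3 := by positivity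
    rw [mul_one_div, div_le_iff₀ hpos]
    nlinarith [h3]
  have hsum1 : ∑ j ∈ Finset.range J, (QO (n-1-2*j) : ℝ) ≤ (Ssum n : ℝ) := by
    have hnat : ∑ j ∈ Finset.range J, QO (n-1-2*j) ≤ Ssum n := by
      have hinj : ∀ x ∈ Finset.range J, ∀ y ∈ Finset.range J,
          n-1-2*x = n-1-2*y → x = y := by
        intro x hx y hy hxy
        have hx' := Finset.mem_range.1 hx
        have hy' := Finset.mem_range.1 hy
        omega
      calc ∑ j ∈ Finset.range J, QO (n-1-2*j)
          = ∑ j ∈ Finset.range J, QDistinct (n-1-2*j) :=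
            Finset.sum_congr rfl fun j _ => QO_eq _
        _ = ∑ i ∈ (Finset.range J).image (fun j => n-1-2*j), QDistinct i :=
            (Finset.sum_image hinj).symm
        _ ≤ ∑ i ∈ Finset.range (n+1), QDistinct i := by
            apply Finset.sum_le_sum_of_subset
            intro i hi
            obtain ⟨j, hj, rfl⟩ := Finset.mem_image.1 hi
            have := Finset.mem_range.1 hj
            exact Finset.mem_range.2 (by omega)
        _ = Ssum n := rfl
    exact_mod_cast hnat
  have hQb : 2 * ((n+2:ℕ):ℝ)^J ≤ (QO (n+1) : ℝ) := by
    have h0 : 2 * (n+2) ^ J ≤ QO (n+1) := hN₀ (n+1) (by omega)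
    exact_mod_cast h0
  have hchain : (((QO (n+1):ℝ)) - ((n+2:ℕ):ℝ)^J) * (∑ j ∈ Finset.range J, (1:ℝ)/(2*(j:ℝ)+3))
      ≤ (Ssum n : ℝ) := by
    rw [Finset.mul_sum]
    exact le_trans (Finset.sum_le_sum hstepR) hsum1
  have hQpos : (0:ℝ) ≤ (QO (n+1):ℝ) := Nat.cast_nonneg _
  have hHpos : (0:ℝ) ≤ 2*(m:ℝ) := by positivity
  have h1 : ((QO (n+1):ℝ)/2) * (2*(m:ℝ))
      ≤ (((QO (n+1):ℝ)) - ((n+2:ℕ):ℝ)^J) * (∑ j ∈ Finset.range J, (1:ℝ)/(2*(j:ℝ)+3)) := by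
    apply mul_le_mul
    · linarith
    · exact hJ
    · exact hHpos
    · linarith
  have : (m:ℝ) * (QO (n+1):ℝ) ≤ (Ssum n : ℝ) := by nlinarith [h1, hchain]
  rw [← QO_eq]
  exact this

lemma ratio0 : Tendsto (fun n => (QDistinct (n+1) : ℝ) / (Ssum n : ℝ)) atTop (nhds 0) := by
  rw [Metric.tendsto_nhds]
  intro ε hε
  obtain ⟨m, hm⟩ := exists_nat_gt (2/ε)
  filter_upwards [main m] with n hn
  have hS : (0:ℝ) < (Ssum n : ℝ) := by exact_mod_cast Ssum_pos n
  have hQ : (0:ℝ) ≤ (QDistinct (n+1) : ℝ) := Nat.cast_nonneg _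
  rw [Real.dist_eq, sub_zero, abs_of_nonneg (by positivity)]
  rw [div_lt_iff₀ hS]
  have h2 : 2 < ε * m := by
    rw [div_lt_iff₀ hε] at hm
    linarith
  rcases eq_or_lt_of_le hQ with h | h
  · rw [← h]
    positivity
  · nlinarith [hn, hS, h2]

lemma ratio1 : Tendsto (fun n => (Ssum (n+1) : ℝ) / (Ssum n : ℝ)) atTop (nhds 1) := by
  have h : ∀ n : ℕ, (Ssum (n+1) : ℝ)/(Ssum n : ℝ) = 1 + (QDistinct (n+1) : ℝ)/(Ssum n : ℝ) := by
    intro n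
    have hS : ((Ssum n : ℕ) : ℝ) ≠ 0 := by
      have := Ssum_pos n
      positivity
    have hnat : Ssum (n+1) = Ssum n + QDistinct (n+1) := Finset.sum_range_succ _ _
    rw [hnat]
    push_cast
    field_simp
  simp only [h]
  simpa using (tendsto_const_nhds (x := (1:ℝ)) (f := atTop)).add ratio0

end SsumAux

/-- For every fixed `k`, `S(n+k)/S(n) → 1` as `n → ∞`. -/
theorem Ssum_ratio_tendsto_one (k : ℕ) :
    Filter.Tendsto (fun n => (Ssum (n + k) : ℝ) / (Ssum n : ℝ)) Filter.atTop (nhds 1) := by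
  induction k with
  | zero =>
    have h : ∀ n : ℕ, (Ssum (n + 0) : ℝ) / (Ssum n : ℝ) = 1 := by
      intro n
      have hS : ((Ssum n : ℕ) : ℝ) ≠ 0 := by
        have := SsumAux.Ssum_pos n
        positivity
      rw [Nat.add_zero, div_self hS]
    simp only [h]
    exact tendsto_const_nhds
  | succ k ih =>
    have h : ∀ n : ℕ, (Ssum (n + (k+1)) : ℝ) / (Ssum n : ℝ)
        = ((Ssum (n + k) : ℝ) / (Ssum n : ℝ)) * ((Ssum ((n + k) + 1) : ℝ) / (Ssum (n + k) : ℝ)) := by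
      intro n
      have hS1 : ((Ssum (n+k) : ℕ) : ℝ) ≠ 0 := by
        have := SsumAux.Ssum_pos (n+k)
        positivity
      have hS2 : ((Ssum n : ℕ) : ℝ) ≠ 0 := by
        have := SsumAux.Ssum_pos n
        positivity
      rw [show n + (k+1) = (n+k)+1 from rfl]
      field_simp
    simp only [h]
    have h2 : Filter.Tendsto (fun n => (Ssum ((n + k) + 1) : ℝ) / (Ssum (n + k) : ℝ))
        Filter.atTop (nhds 1) :=
      (Filter.tendsto_add_atTop_iff_nat k).2 SsumAux.ratio1
    simpa using ih.mul h2
end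

section
/- Let F₁, F₂ ∈ ℤ[[q]] be the formal power series F₁ = (1−q)² · G₁^{-1} with G₁ = (1−q^{12})(1−q^{14}) · ∏_{i≥1}(1−q^{2i−1}), and F₂ = (1−q)² · G₂^{-1} with G₂ = (1−q^{12}) · ∏_{i≥1}(1−q^{2i−1}). Then for every integer n ≥ 17, the coefficient of q^n in F₁ is nonnegative and the coefficient of q^n in F₂ is nonnegative. -/
open PowerSeries

/-- The infinite product `∏_{i ∈ A} (1 - q^i)` (for a set `A` of positive integers),
defined coefficientwise: the coefficient of `q^n` only depends on the factors with `i ≤ n`. -/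
noncomputable def prodOneSubPow (A : ℕ → Prop) [DecidablePred A] : PowerSeries ℤ :=
  PowerSeries.mk fun n =>
    PowerSeries.coeff n (∏ i ∈ (Finset.range (n + 1)).filter A, (1 - (PowerSeries.X : PowerSeries ℤ) ^ i))

/-- `(q; q²)_∞ = ∏_{i ≥ 1} (1 - q^{2i-1})`, the product of `1 - q^m` over all odd `m`. -/
noncomputable def prodOdd : PowerSeries ℤ := prodOneSubPow (fun m => m % 2 = 1)


/-- `G₁ = (1−q¹²)(1−q¹⁴)·∏_{i≥1}(1−q^{2i−1})`, a power series with constant term `1`. -/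
noncomputable def G1ser : PowerSeries ℤ := (1 - X ^ 12) * (1 - X ^ 14) * prodOdd

/-- `G₂ = (1−q¹²)·∏_{i≥1}(1−q^{2i−1})`, a power series with constant term `1`. -/
noncomputable def G2ser : PowerSeries ℤ := (1 - X ^ 12) * prodOdd

namespace Cert
open Finset




/-- finite product `∏_{i=1}^{N} (1+X^i)` -/
noncomputable def PN (N : ℕ) : PowerSeries ℤ := ∏ i ∈ Finset.Ioc 0 N, (1 + X ^ i)

/-- finite product `∏_{i=2}^{j+1} (1+X^i)` -/
noncomputable def QQ (j : ℕ) : PowerSeries ℤ := ∏ i ∈ Finset.Ioc 1 (j + 1), (1 + X ^ i)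

/-- the infinite product `∏_{i≥1}(1+X^i)` defined coefficientwise -/
noncomputable def prodOnePlus : PowerSeries ℤ := PowerSeries.mk fun n => coeff n (PN n)

/-- `1/(1-X^k) = Σ X^{km}` -/
noncomputable def geom (k : ℕ) : PowerSeries ℤ := PowerSeries.mk fun n => if k ∣ n then 1 else 0

/-- agreement of coefficients up to degree n -/
def TEq (n : ℕ) (f g : PowerSeries ℤ) : Prop := ∀ m ≤ n, coeff m f = coeff m g

lemma TEq.refl (n : ℕ) (f : PowerSeries ℤ) : TEq n f f := fun _ _ => rfl

lemma TEq.coeff_eq {n : ℕ} {f g : PowerSeries ℤ} (h : TEq n f g) :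
    coeff n f = coeff n g := h n le_rfl

lemma TEq.symm {n : ℕ} {f g : PowerSeries ℤ} (h : TEq n f g) : TEq n g f :=
  fun m hm => (h m hm).symm

lemma TEq.trans {n : ℕ} {f g h : PowerSeries ℤ} (h1 : TEq n f g) (h2 : TEq n g h) :
    TEq n f h := fun m hm => (h1 m hm).trans (h2 m hm)

lemma TEq.mul {n : ℕ} {f g f' g' : PowerSeries ℤ} (h1 : TEq n f g) (h2 : TEq n f' g') :
    TEq n (f * f') (g * g') := by
  intro m hm
  rw [coeff_mul, coeff_mul]
  refine Finset.sum_congr rfl fun p hp => ?_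
  rw [HasAntidiagonal.mem_antidiagonal] at hp
  rw [h1 p.1 (le_trans (by omega) hm), h2 p.2 (le_trans (by omega) hm)]

lemma TEq.prod_one {n : ℕ} {s : Finset ℕ} {f : ℕ → PowerSeries ℤ}
    (h : ∀ i ∈ s, TEq n (f i) 1) : TEq n (∏ i ∈ s, f i) 1 := by
  classical
  induction s using Finset.induction_on with
  | empty => simpa using TEq.refl n 1
  | @insert a s' hx ih =>
    rw [Finset.prod_insert hx]
    have := (h a (Finset.mem_insert_self a s')).mul
      (ih (fun i hi => h i (Finset.mem_insert_of_mem hi)))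
    simpa using this

lemma TEq_one_add_pow {n i : ℕ} (h : n < i) : TEq n ((1 : PowerSeries ℤ) + X ^ i) 1 := by
  intro m hm
  rw [map_add, coeff_X_pow, if_neg (by omega)]
  ring

lemma TEq_one_sub_pow {n i : ℕ} (h : n < i) : TEq n ((1 : PowerSeries ℤ) - X ^ i) 1 := by
  intro m hm
  rw [map_sub, coeff_X_pow, if_neg (by omega)]
  ring

lemma PN_succ (N : ℕ) : PN (N + 1) = PN N * (1 + X ^ (N + 1)) := by
  rw [PN, PN, Finset.prod_Ioc_succ_top (Nat.zero_le _)]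

lemma QQ_succ (j : ℕ) : QQ (j + 1) = QQ j * (1 + X ^ (j + 2)) := by
  rw [QQ, QQ, Finset.prod_Ioc_succ_top (by omega)]

lemma QQ_zero : QQ 0 = 1 := by
  rw [QQ]
  simp

lemma PN_zero : PN 0 = 1 := by
  rw [PN]
  simp

/-- `PN (j+1) = (1+X) * QQ j` -/
lemma PN_eq_QQ (j : ℕ) : PN (j + 1) = (1 + X) * QQ j := by
  rw [PN, QQ, ← Finset.prod_Ioc_consecutive _ (Nat.zero_le 1) (by omega : 1 ≤ j + 1)]
  congr 1
  rw [show Finset.Ioc 0 1 = {1} from rfl, Finset.prod_singleton, pow_one]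

lemma PN_stab {n N : ℕ} (h : n ≤ N) : TEq n (PN N) (PN n) := by
  rw [PN, ← Finset.prod_Ioc_consecutive _ (Nat.zero_le n) h]
  have h2 : TEq n (∏ i ∈ Finset.Ioc n N, (1 + X ^ i : PowerSeries ℤ)) 1 :=
    TEq.prod_one fun i hi => TEq_one_add_pow (Finset.mem_Ioc.mp hi).1
  have := (TEq.refl n (PN n)).mul h2
  simpa [PN] using this

lemma prodOnePlus_stab {n N : ℕ} (h : n ≤ N) : TEq n prodOnePlus (PN N) := by
  intro m hm
  rw [prodOnePlus, coeff_mk]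
  exact ((PN_stab (le_trans hm h)).coeff_eq).symm


-- nonneg lemmas
lemma coeff_mul_nonneg {f g : PowerSeries ℤ} (hf : ∀ m, 0 ≤ coeff m f)
    (hg : ∀ m, 0 ≤ coeff m g) : ∀ n, 0 ≤ coeff n (f * g) := by
  intro n
  rw [coeff_mul]
  exact Finset.sum_nonneg fun p _ => mul_nonneg (hf p.1) (hg p.2)

lemma prod_one_add_nonneg (s : Finset ℕ) :
    ∀ n, 0 ≤ coeff n (∏ i ∈ s, ((1 : PowerSeries ℤ) + X ^ i)) := by
  classical
  induction s using Finset.induction_on with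
  | empty =>
    intro n
    simp [coeff_one]
    split <;> norm_num
  | @insert a s' hx ih =>
    rw [Finset.prod_insert hx]
    refine coeff_mul_nonneg (fun m => ?_) ih
    rw [map_add, coeff_one, coeff_X_pow]
    split <;> split <;> norm_num

noncomputable def OddP (N : ℕ) : PowerSeries ℤ :=
  ∏ i ∈ (Finset.range (N + 1)).filter (fun m => m % 2 = 1), (1 - X ^ i)

lemma coeff_prodOdd (n : ℕ) : coeff n prodOdd = coeff n (OddP n) := by
  rw [prodOdd, prodOneSubPow, coeff_mk, OddP]

lemma factor_id (i : ℕ) : ((1 : PowerSeries ℤ) + X ^ i) * (1 - X ^ i) = 1 - X ^ (2 * i) := by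
  have : (X : PowerSeries ℤ) ^ (2 * i) = X ^ i * X ^ i := by
    rw [two_mul, pow_add]
  rw [this]; ring



noncomputable def EvenP (N : ℕ) : PowerSeries ℤ :=
  ∏ i ∈ (Finset.Ioc 0 N).filter (fun m => ¬ m % 2 = 1), (1 - X ^ i)

lemma EvenP_eq (N : ℕ) : EvenP N = ∏ i ∈ Finset.Ioc 0 (N / 2), (1 - X ^ (2 * i)) := by
  have himg : (Finset.Ioc 0 (N / 2)).image (fun i => 2 * i)
      = (Finset.Ioc 0 N).filter (fun m => ¬ m % 2 = 1) := by
    ext m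
    simp only [Finset.mem_image, Finset.mem_filter, Finset.mem_Ioc]
    constructor
    · rintro ⟨i, ⟨h1, h2⟩, rfl⟩
      omega
    · rintro ⟨⟨h1, h2⟩, h3⟩
      exact ⟨m / 2, ⟨by omega, by omega⟩, by omega⟩
  rw [EvenP, ← himg, Finset.prod_image (fun i _ j _ h => by omega)]

lemma constantCoeff_EvenP (N : ℕ) : constantCoeff (EvenP N) = 1 := by
  rw [EvenP, map_prod]
  refine Finset.prod_eq_one fun i hi => ?_
  have hi1 : 0 < i := (Finset.mem_Ioc.mp (Finset.mem_filter.mp hi).1).1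
  rw [map_sub, map_one, map_pow, constantCoeff_X, zero_pow (by omega), sub_zero]

lemma EvenP_ne_zero (N : ℕ) : EvenP N ≠ 0 := by
  intro h
  have := constantCoeff_EvenP N
  rw [h, map_zero] at this
  norm_num at this

lemma key_fin (N : ℕ) :
    PN N * OddP N = ∏ i ∈ Finset.Ioc (N / 2) N, ((1 : PowerSeries ℤ) - X ^ (2 * i)) := by
  have h1 : PN N * (∏ i ∈ Finset.Ioc 0 N, ((1 : PowerSeries ℤ) - X ^ i))
      = ∏ i ∈ Finset.Ioc 0 N, ((1 : PowerSeries ℤ) - X ^ (2 * i)) := by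
    rw [PN, ← Finset.prod_mul_distrib]
    exact Finset.prod_congr rfl fun i _ => factor_id i
  have h2 : (∏ i ∈ Finset.Ioc 0 N, ((1 : PowerSeries ℤ) - X ^ i)) = OddP N * EvenP N := by
    rw [OddP, EvenP, ← Finset.prod_filter_mul_prod_filter_not (Finset.Ioc 0 N)
      (fun m => m % 2 = 1)]
    congr 2
    ext m
    simp only [Finset.mem_filter, Finset.mem_Ioc, Finset.mem_range]
    omega
  have h4 : (∏ i ∈ Finset.Ioc 0 N, ((1 : PowerSeries ℤ) - X ^ (2 * i)))
      = EvenP N * ∏ i ∈ Finset.Ioc (N / 2) N, ((1 : PowerSeries ℤ) - X ^ (2 * i)) := by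
    rw [EvenP_eq, Finset.prod_Ioc_consecutive _ (Nat.zero_le _) (Nat.div_le_self N 2)]
  apply mul_right_cancel₀ (EvenP_ne_zero N)
  calc (PN N * OddP N) * EvenP N = PN N * (∏ i ∈ Finset.Ioc 0 N, ((1:PowerSeries ℤ) - X ^ i)) := by
        rw [h2]; ring
    _ = EvenP N * ∏ i ∈ Finset.Ioc (N / 2) N, ((1 : PowerSeries ℤ) - X ^ (2 * i)) := by
        rw [h1, h4]
    _ = (∏ i ∈ Finset.Ioc (N / 2) N, ((1 : PowerSeries ℤ) - X ^ (2 * i))) * EvenP N := by ring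


lemma OddP_stab {n N : ℕ} (h : n ≤ N) : TEq n (OddP N) (OddP n) := by
  induction N with
  | zero => have : n = 0 := by omega
            subst this; exact TEq.refl _ _
  | succ N ih =>
    rcases Nat.lt_or_ge n (N + 1) with hlt | hge
    · have hih := ih (by omega)
      have hsplit : OddP (N + 1) = if (N + 1) % 2 = 1 then (1 - X ^ (N + 1)) * OddP N else OddP N := by
        rw [OddP, OddP, Finset.range_add_one, Finset.filter_insert]
        split
        · rw [Finset.prod_insert (by simp)]
        · rfl
      rw [hsplit]
      split
      · have := (TEq_one_sub_pow (by omega : n < N + 1)).mul hih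
        simpa using this
      · exact hih
    · have : n = N + 1 := by omega
      subst this; exact TEq.refl _ _

lemma prodOdd_stab {n N : ℕ} (h : n ≤ N) : TEq n prodOdd (OddP N) := by
  intro m hm
  rw [coeff_prodOdd]
  exact ((OddP_stab (le_trans hm h)) m le_rfl).symm

theorem euler : prodOnePlus * prodOdd = 1 := by
  ext n
  have t1 : TEq n prodOnePlus (PN n) := prodOnePlus_stab le_rfl
  have t2 : TEq n prodOdd (OddP n) := prodOdd_stab le_rfl
  rw [(t1.mul t2).coeff_eq, key_fin n]
  have : TEq n (∏ i ∈ Finset.Ioc (n / 2) n, ((1 : PowerSeries ℤ) - X ^ (2 * i))) 1 :=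
    TEq.prod_one fun i hi => TEq_one_sub_pow (by
      have := (Finset.mem_Ioc.mp hi).1
      omega)
  exact this.coeff_eq

lemma idA (N : ℕ) : ((1 : PowerSeries ℤ) - X) * PN (N + 1)
    = 1 + (∑ j ∈ Finset.range N, PN j * X ^ (2 * j + 3)) - PN N * X ^ (N + 2) := by
  induction N with
  | zero =>
    rw [PN_succ 0, PN_zero]
    simp only [Finset.sum_range_zero]
    ring
  | succ N ih =>
    have hPN : PN (N + 1) = PN N * (1 + X ^ (N + 1)) := PN_succ N
    rw [PN_succ (N + 1), Finset.sum_range_succ]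
    linear_combination ih + (X ^ (N + 2)) * hPN

lemma idD (M : ℕ) : ((1 : PowerSeries ℤ) - X) ^ 2 * PN (M + 2) + QQ M * X ^ (2 * M + 5)
      + (((1 : PowerSeries ℤ) - X) * PN (M + 1)) * X ^ (M + 3)
    = (1 - X + X ^ 3 - X ^ 4 + X ^ 5 : PowerSeries ℤ)
      + ∑ i ∈ Finset.range M, QQ i * X ^ (3 * i + 9) := by
  induction M with
  | zero =>
    rw [show (0:ℕ) + 2 = 1 + 1 from rfl, PN_eq_QQ 1, PN_eq_QQ 0, QQ_succ 0, QQ_zero]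
    simp only [Finset.sum_range_zero]
    ring
  | succ M ih =>
    rw [Finset.sum_range_succ, ← add_assoc, ← ih]
    rw [show M + 1 + 2 = (M + 2) + 1 from rfl, PN_eq_QQ (M + 2), PN_eq_QQ (M + 1),
      QQ_succ (M + 1), QQ_succ M, show M + 1 + 1 = (M + 1) + 1 from rfl, PN_eq_QQ M]
    ring

lemma coeff_mul_X_pow_high {f : PowerSeries ℤ} {n k : ℕ} (h : n < k) :
    coeff n (f * X ^ k) = 0 := by
  rw [PowerSeries.coeff_mul_X_pow', if_neg (by omega)]

lemma coeff_QQ_nonneg (i n : ℕ) : 0 ≤ coeff n (QQ i) := prod_one_add_nonneg _ n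

lemma coeff_term_nonneg (i n k : ℕ) : 0 ≤ coeff n (QQ i * X ^ k) := by
  rw [PowerSeries.coeff_mul_X_pow']
  split
  · exact coeff_QQ_nonneg _ _
  · exact le_refl 0

/-- head polynomial -/
noncomputable def headP : PowerSeries ℤ := 1 - X + X ^ 3 - X ^ 4 + X ^ 5

lemma coeff_headP (n : ℕ) : coeff n headP
    = (if n = 0 then 1 else 0) - (if n = 1 then 1 else 0) + (if n = 3 then 1 else 0)
      - (if n = 4 then 1 else 0) + (if n = 5 then 1 else 0) := by
  rw [headP, map_add, map_sub, map_add, map_sub, coeff_one, coeff_X_pow, coeff_X_pow,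
    coeff_X_pow, PowerSeries.coeff_X]

/-- The fundamental coefficient formula for `B = (1-X)^2 * prodOnePlus`. -/
lemma coeff_B (n : ℕ) : coeff n (((1 : PowerSeries ℤ) - X) ^ 2 * prodOnePlus)
    = coeff n headP + ∑ i ∈ Finset.range n, coeff n (QQ i * X ^ (3 * i + 9)) := by
  have t : TEq n (((1 : PowerSeries ℤ) - X) ^ 2 * prodOnePlus)
      (((1 : PowerSeries ℤ) - X) ^ 2 * PN (n + 2)) :=
    (TEq.refl n _).mul (prodOnePlus_stab (by omega))
  rw [t.coeff_eq]
  have h := congrArg (coeff n) (idD n)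
  rw [map_add, map_add, map_add, map_sum,
    coeff_mul_X_pow_high (by omega : n < 2 * n + 5),
    coeff_mul_X_pow_high (by omega : n < n + 3)] at h
  rw [← headP] at h
  simpa using h

lemma B_ge_neg_one (n : ℕ) : -1 ≤ coeff n (((1 : PowerSeries ℤ) - X) ^ 2 * prodOnePlus) := by
  rw [coeff_B, coeff_headP]
  have hs : 0 ≤ ∑ i ∈ Finset.range n, coeff n (QQ i * X ^ (3 * i + 9)) :=
    Finset.sum_nonneg fun i _ => coeff_term_nonneg i n _
  split_ifs <;> omega

lemma B_nonneg {n : ℕ} (h1 : n ≠ 1) (h4 : n ≠ 4) :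
    0 ≤ coeff n (((1 : PowerSeries ℤ) - X) ^ 2 * prodOnePlus) := by
  rw [coeff_B, coeff_headP]
  have hs : 0 ≤ ∑ i ∈ Finset.range n, coeff n (QQ i * X ^ (3 * i + 9)) :=
    Finset.sum_nonneg fun i _ => coeff_term_nonneg i n _
  split_ifs <;> omega

lemma coeff_zero_QQ (i : ℕ) : coeff 0 (QQ i) = 1 := by
  rw [QQ, coeff_zero_eq_constantCoeff, map_prod]
  refine Finset.prod_eq_one fun j hj => ?_
  have : 0 < j := by
    have := (Finset.mem_Ioc.mp hj).1
    omega
  rw [map_add, map_one, map_pow, constantCoeff_X, zero_pow (by omega), add_zero]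

lemma B_single_term {n i : ℕ} (hi : i < n) :
    coeff n (QQ i * X ^ (3 * i + 9))
      ≤ ∑ j ∈ Finset.range n, coeff n (QQ j * X ^ (3 * j + 9)) :=
  Finset.single_le_sum (f := fun j => coeff n (QQ j * X ^ (3 * j + 9)))
    (fun j _ => coeff_term_nonneg j n _) (Finset.mem_range.mpr hi)

lemma QQ3_expand : QQ 3 = 1 + X ^ 2 + X ^ 3 + X ^ 4 + X ^ 5 + X ^ 6 + X ^ 7 + X ^ 9 := by
  rw [show (3:ℕ) = 2 + 1 from rfl, QQ_succ, show (2:ℕ) = 1 + 1 from rfl, QQ_succ,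
    show (1:ℕ) = 0 + 1 from rfl, QQ_succ, QQ_zero]
  ring

lemma QQ4_expand : QQ 4 = 1 + X ^ 2 + X ^ 3 + X ^ 4 + X ^ 5 + X ^ 5 + X ^ 6 + X ^ 7 + X ^ 7
    + X ^ 8 + X ^ 9 + X ^ 9 + X ^ 10 + X ^ 11 + X ^ 12 + X ^ 14 := by
  rw [show (4:ℕ) = 3 + 1 from rfl, QQ_succ, QQ3_expand]
  ring

lemma coeff7_QQ3 : coeff 7 (QQ 3) = 1 := by
  rw [QQ3_expand]
  simp [coeff_one, coeff_X_pow]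

lemma coeff7_QQ4 : coeff 7 (QQ 4) = 2 := by
  rw [QQ4_expand]
  simp [coeff_one, coeff_X_pow]

lemma B_ge_one_15 : 1 ≤ coeff 15 (((1 : PowerSeries ℤ) - X) ^ 2 * prodOnePlus) := by
  have h := B_single_term (n := 15) (i := 2) (by omega)
  rw [PowerSeries.coeff_mul_X_pow', if_pos (by norm_num : 3 * 2 + 9 ≤ 15)] at h
  norm_num [coeff_zero_QQ] at h
  rw [coeff_B, coeff_headP]
  norm_num
  linarith [h]

lemma B_ge_one_18 : 1 ≤ coeff 18 (((1 : PowerSeries ℤ) - X) ^ 2 * prodOnePlus) := by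
  have h := B_single_term (n := 18) (i := 3) (by omega)
  rw [PowerSeries.coeff_mul_X_pow', if_pos (by norm_num : 3 * 3 + 9 ≤ 18)] at h
  norm_num [coeff_zero_QQ] at h
  rw [coeff_B, coeff_headP]
  norm_num
  linarith [h]

lemma B_ge_one_25 : 1 ≤ coeff 25 (((1 : PowerSeries ℤ) - X) ^ 2 * prodOnePlus) := by
  have h := B_single_term (n := 25) (i := 3) (by omega)
  rw [PowerSeries.coeff_mul_X_pow', if_pos (by norm_num : 3 * 3 + 9 ≤ 25)] at h
  norm_num [coeff7_QQ3] at h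
  rw [coeff_B, coeff_headP]
  norm_num
  linarith [h]

lemma B_ge_one_28 : 1 ≤ coeff 28 (((1 : PowerSeries ℤ) - X) ^ 2 * prodOnePlus) := by
  have h := B_single_term (n := 28) (i := 4) (by omega)
  rw [PowerSeries.coeff_mul_X_pow', if_pos (by norm_num : 3 * 4 + 9 ≤ 28)] at h
  norm_num [coeff7_QQ4] at h
  rw [coeff_B, coeff_headP]
  norm_num
  linarith [h]

/-- abbreviation -/
noncomputable def Bser : PowerSeries ℤ := ((1 : PowerSeries ℤ) - X) ^ 2 * prodOnePlus
noncomputable def E2ser : PowerSeries ℤ := Bser * geom 12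
noncomputable def E1ser : PowerSeries ℤ := E2ser * geom 14

lemma geom12_rec : geom 12 = 1 + geom 12 * X ^ 12 := by
  ext n
  rw [map_add, coeff_one, PowerSeries.coeff_mul_X_pow']
  simp only [geom, coeff_mk]
  split_ifs <;> omega

lemma geom14_rec : geom 14 = 1 + geom 14 * X ^ 14 := by
  ext n
  rw [map_add, coeff_one, PowerSeries.coeff_mul_X_pow']
  simp only [geom, coeff_mk]
  split_ifs <;> omega

lemma geom12_inv : ((1 : PowerSeries ℤ) - X ^ 12) * geom 12 = 1 := by
  have h : ((1 : PowerSeries ℤ) - X ^ 12) * geom 12 = geom 12 - geom 12 * X ^ 12 := by ring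
  rw [h]
  ext n
  rw [map_sub, PowerSeries.coeff_mul_X_pow', coeff_one]
  simp only [geom, coeff_mk]
  split_ifs <;> omega

lemma geom14_inv : ((1 : PowerSeries ℤ) - X ^ 14) * geom 14 = 1 := by
  have h : ((1 : PowerSeries ℤ) - X ^ 14) * geom 14 = geom 14 - geom 14 * X ^ 14 := by ring
  rw [h]
  ext n
  rw [map_sub, PowerSeries.coeff_mul_X_pow', coeff_one]
  simp only [geom, coeff_mk]
  split_ifs <;> omega

lemma E2_rec (n : ℕ) : coeff n E2ser
    = coeff n Bser + (if 12 ≤ n then coeff (n - 12) E2ser else 0) := by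
  have h : E2ser = Bser + E2ser * X ^ 12 := by
    rw [E2ser]
    nth_rewrite 1 [geom12_rec]
    ring
  nth_rewrite 1 [h]
  rw [map_add, PowerSeries.coeff_mul_X_pow']

lemma E1_rec (n : ℕ) : coeff n E1ser
    = coeff n E2ser + (if 14 ≤ n then coeff (n - 14) E1ser else 0) := by
  have h : E1ser = E2ser + E1ser * X ^ 14 := by
    rw [E1ser]
    nth_rewrite 1 [geom14_rec]
    ring
  nth_rewrite 1 [h]
  rw [map_add, PowerSeries.coeff_mul_X_pow']

/-- lower bound profile for `E2` -/
def lb2 (n : ℕ) : ℤ :=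
  if n = 1 ∨ n = 4 ∨ n = 13 ∨ n = 16 then -1
  else if n = 15 ∨ n = 18 ∨ n = 27 ∨ n = 30 then 1 else 0

/-- lower bound profile for `E1` -/
def lb1 (n : ℕ) : ℤ := if n = 1 ∨ n = 4 ∨ n = 13 ∨ n = 16 then -1 else 0

lemma E2_lb : ∀ n, lb2 n ≤ coeff n E2ser := by
  intro n
  induction n using Nat.strong_induction_on with
  | _ n ih =>
    rw [E2_rec]
    by_cases h12 : 12 ≤ n
    · rw [if_pos h12]
      have ihm := ih (n - 12) (by omega)
      have hB1 : -1 ≤ coeff n Bser := B_ge_neg_one n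
      by_cases h15 : n = 15
      · subst h15
        have := B_ge_one_15
        simp only [lb2, Bser] at *
        norm_num at ihm ⊢
        linarith
      by_cases h18 : n = 18
      · subst h18
        have := B_ge_one_18
        simp only [lb2, Bser] at *
        norm_num at ihm ⊢
        linarith
      by_cases h25 : n = 25
      · subst h25
        have := B_ge_one_25
        simp only [lb2, Bser] at *
        norm_num at ihm ⊢
        linarith
      by_cases h28 : n = 28
      · subst h28
        have := B_ge_one_28
        simp only [lb2, Bser] at *
        norm_num at ihm ⊢
        linarith
      -- generic case for n ≥ 12
      have hBn : 0 ≤ coeff n Bser := B_nonneg (by omega) (by omega)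
      by_cases h13 : n = 13
      · subst h13
        simp only [lb2] at ihm ⊢
        norm_num at ihm ⊢
        linarith
      by_cases h16 : n = 16
      · subst h16
        simp only [lb2] at ihm ⊢
        norm_num at ihm ⊢
        linarith
      by_cases h27 : n = 27
      · subst h27
        simp only [lb2] at ihm ⊢
        norm_num at ihm ⊢
        linarith
      by_cases h30 : n = 30
      · subst h30
        simp only [lb2] at ihm ⊢
        norm_num at ihm ⊢
        linarith
      -- fully generic
      have hlbn : lb2 n ≤ 0 := by
        simp only [lb2]
        split_ifs <;> omega
      have hlbm : 0 ≤ lb2 (n - 12) := by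
        simp only [lb2]
        split_ifs <;> omega
      linarith
    · rw [if_neg h12, add_zero]
      have hB1 : -1 ≤ coeff n Bser := B_ge_neg_one n
      by_cases h1 : n = 1 ∨ n = 4
      · have : lb2 n = -1 := by
          simp only [lb2]
          split_ifs <;> omega
        rw [this]
        exact hB1
      · have hBn : 0 ≤ coeff n Bser := B_nonneg (by omega) (by omega)
        have : lb2 n = 0 := by
          simp only [lb2]
          split_ifs <;> omega
        rw [this]
        exact hBn

lemma E2_lb_nonneg {n : ℕ} (h : ¬(n = 1 ∨ n = 4 ∨ n = 13 ∨ n = 16)) :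
    0 ≤ coeff n E2ser := by
  have := E2_lb n
  have h2 : 0 ≤ lb2 n := by
    simp only [lb2]
    split_ifs <;> omega
  linarith

lemma E2_lb_one {n : ℕ} (h : n = 15 ∨ n = 18 ∨ n = 27 ∨ n = 30) :
    1 ≤ coeff n E2ser := by
  have := E2_lb n
  have h2 : lb2 n = 1 := by
    simp only [lb2]
    split_ifs <;> omega
  linarith

lemma E1_lb : ∀ n, lb1 n ≤ coeff n E1ser := by
  intro n
  induction n using Nat.strong_induction_on with
  | _ n ih =>
    rw [E1_rec]
    by_cases h14 : 14 ≤ n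
    · rw [if_pos h14]
      have ihm := ih (n - 14) (by omega)
      by_cases hsp : n = 15 ∨ n = 18 ∨ n = 27 ∨ n = 30
      · have h2 := E2_lb_one hsp
        have hm : lb1 (n - 14) = -1 := by
          simp only [lb1]
          split_ifs <;> omega
        have hn : lb1 n = 0 := by
          simp only [lb1]
          split_ifs <;> omega
        rw [hn]
        rw [hm] at ihm
        linarith
      · by_cases h16 : n = 16
        · subst h16
          have h2 := E2_lb 16
          have : lb2 16 = -1 := by norm_num [lb2]
          rw [this] at h2
          have hm : lb1 2 = 0 := by norm_num [lb1]
          norm_num at ihm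
          have hn : lb1 16 = -1 := by norm_num [lb1]
          rw [hn]
          rw [hm] at ihm
          linarith
        · -- generic n ≥ 14
          have h2 : 0 ≤ coeff n E2ser := E2_lb_nonneg (by omega)
          have hm : 0 ≤ lb1 (n - 14) := by
            simp only [lb1]
            split_ifs <;> omega
          have hn : lb1 n ≤ 0 := by
            simp only [lb1]
            split_ifs <;> omega
          linarith
    · rw [if_neg h14, add_zero]
      have := E2_lb n
      have h2 : lb1 n ≤ lb2 n := by
        simp only [lb1, lb2]
        split_ifs <;> omega
      linarith

lemma constCoeff_prodOdd : constantCoeff prodOdd = 1 := by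
  rw [← coeff_zero_eq_constantCoeff, coeff_prodOdd, OddP]
  have he : (Finset.range 1).filter (fun m => m % 2 = 1) = ∅ := rfl
  rw [he, Finset.prod_empty]
  simp

lemma constCoeff_G2 : constantCoeff G2ser = 1 := by
  rw [G2ser, map_mul, map_sub, map_one, map_pow, constantCoeff_X, constCoeff_prodOdd]
  norm_num

lemma constCoeff_G1 : constantCoeff G1ser = 1 := by
  rw [G1ser, map_mul, map_mul, map_sub, map_sub, map_one, map_pow, map_pow, constantCoeff_X,
    constCoeff_prodOdd]
  norm_num

lemma hG2mul : G2ser * (geom 12 * prodOnePlus) = 1 := by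
  rw [G2ser]
  have h : ((1 : PowerSeries ℤ) - X ^ 12) * prodOdd * (geom 12 * prodOnePlus)
      = (((1 : PowerSeries ℤ) - X ^ 12) * geom 12) * (prodOnePlus * prodOdd) := by ring
  rw [h, geom12_inv, euler, one_mul]

lemma hG1mul : G1ser * (geom 12 * (geom 14 * prodOnePlus)) = 1 := by
  rw [G1ser]
  have h : ((1 : PowerSeries ℤ) - X ^ 12) * (1 - X ^ 14) * prodOdd
        * (geom 12 * (geom 14 * prodOnePlus))
      = (((1 : PowerSeries ℤ) - X ^ 12) * geom 12)
        * ((((1 : PowerSeries ℤ) - X ^ 14) * geom 14) * (prodOnePlus * prodOdd)) := by ring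
  rw [h, geom12_inv, geom14_inv, euler]; norm_num

lemma G2_ne : G2ser ≠ 0 := by
  intro h
  have := constCoeff_G2
  rw [h, map_zero] at this
  norm_num at this

lemma G1_ne : G1ser ≠ 0 := by
  intro h
  have := constCoeff_G1
  rw [h, map_zero] at this
  norm_num at this

lemma inv2 : PowerSeries.invOfUnit G2ser 1 = geom 12 * prodOnePlus := by
  have hc : constantCoeff G2ser = ((1 : ℤˣ) : ℤ) := by rw [constCoeff_G2]; rfl
  have h1 := PowerSeries.mul_invOfUnit G2ser 1 hc
  exact mul_left_cancel₀ G2_ne (h1.trans hG2mul.symm)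

lemma inv1 : PowerSeries.invOfUnit G1ser 1 = geom 12 * (geom 14 * prodOnePlus) := by
  have hc : constantCoeff G1ser = ((1 : ℤˣ) : ℤ) := by rw [constCoeff_G1]; rfl
  have h1 := PowerSeries.mul_invOfUnit G1ser 1 hc
  exact mul_left_cancel₀ G1_ne (h1.trans hG1mul.symm)

lemma F2_eq : ((1 : PowerSeries ℤ) - X) ^ 2 * PowerSeries.invOfUnit G2ser 1 = E2ser := by
  rw [inv2, E2ser, Bser]
  ring

lemma F1_eq : ((1 : PowerSeries ℤ) - X) ^ 2 * PowerSeries.invOfUnit G1ser 1 = E1ser := by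
  rw [inv1, E1ser, E2ser, Bser]
  ring

end Cert

/-- For `n ≥ 17`, the coefficients of `qⁿ` in `F₁ = (1−q)²·G₁⁻¹` and in `F₂ = (1−q)²·G₂⁻¹`
are nonnegative, where the inverses in `ℤ[[q]]` are taken via `PowerSeries.invOfUnit`
(both `G₁` and `G₂` have constant term `1`). -/
theorem coeff_nonneg_F1_F2 (n : ℕ) (hn : 17 ≤ n) :
    0 ≤ PowerSeries.coeff n ((1 - X) ^ 2 * PowerSeries.invOfUnit G1ser 1) ∧
      0 ≤ PowerSeries.coeff n ((1 - X) ^ 2 * PowerSeries.invOfUnit G2ser 1) := by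
  constructor
  · rw [Cert.F1_eq]
    have h := Cert.E1_lb n
    have h0 : Cert.lb1 n = 0 := by
      simp only [Cert.lb1]
      split_ifs <;> omega
    linarith
  · rw [Cert.F2_eq]
    have h := Cert.E2_lb n
    have h0 : 0 ≤ Cert.lb2 n := by
      simp only [Cert.lb2]
      split_ifs <;> omega
    linarith
end
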